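/- arXiv:2204.03022 — 3 statements merged into one kernel-verified Lean document; each statement's English description precedes it below -/
import Mathlib

section
/- The monoid M_{U,P,L} is isomorphic to the monoid presented by three generators u, p, l subject to the relations p² = l² = 1, l·p·l = p·l·p, u³ = u, u·p = u·l, p·u = l·u, u²·p·u² = p·u²·p·u²·p, (u·p)²·u² = p·(u·p)²·u²·p, and u²·(p·u)² = p·u²·(p·u)²·p; that is, the quotient of the free monoid on three generators by the congruence generated by these relations is isomorphic as a monoid to M_{U,P,L}, via the map sending u, p, l to U, P, L respectively. -/
namespace CubeDance

/-- The set `X` of the 12 major triads, 12 minor triads, and 4 augmented triads. -/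
inductive Triad : Type
  | maj : ZMod 12 → Triad
  | min : ZMod 12 → Triad
  | aug : ZMod 4 → Triad
  deriving DecidableEq

/-- Binary relations on `X`. -/
abbrev RelM : Type := Triad → Triad → Prop

/-- Binary relations on `X` form a monoid under relational composition,
with identity the diagonal relation. -/
instance : Monoid RelM where
  mul R S := fun p q => ∃ r, R p r ∧ S r q
  one := fun p q => p = q
  mul_assoc R S T := by
    funext p q
    apply propext
    constructor
    · rintro ⟨r, ⟨s, h1, h2⟩, h3⟩
      exact ⟨s, h1, r, h2, h3⟩
    · rintro ⟨s, h1, r, h2, h3⟩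
      exact ⟨r, ⟨s, h1, h2⟩, h3⟩
  one_mul R := by
    funext p q
    apply propext
    constructor
    · rintro ⟨r, rfl, h⟩
      exact h
    · intro h
      exact ⟨p, rfl, h⟩
  mul_one R := by
    funext p q
    apply propext
    constructor
    · rintro ⟨r, h, rfl⟩
      exact h
    · intro h
      exact ⟨q, h, rfl⟩

/-- The relation `U`, relating `a_aug` with `x_M` whenever `x ≡ a (mod 4)` and
`a_aug` with `x_m` whenever `x ≡ a + 1 (mod 4)`. -/
def U : RelM := fun p q =>
  match p, q with
  | .aug a, .maj x => (x.val : ZMod 4) = a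
  | .maj x, .aug a => (x.val : ZMod 4) = a
  | .aug a, .min x => (x.val : ZMod 4) = a + 1
  | .min x, .aug a => (x.val : ZMod 4) = a + 1
  | _, _ => False

/-- The relation `P`, relating `x_M` with `x_m`, and each augmented triad with itself. -/
def P : RelM := fun p q =>
  match p, q with
  | .maj x, .min y => x = y
  | .min x, .maj y => x = y
  | .aug a, .aug b => a = b
  | _, _ => False

/-- The relation `L`, relating `x_M` with `(x+4)_m`, and each augmented triad with itself. -/
def L : RelM := fun p q =>
  match p, q with
  | .maj x, .min y => y = x + 4
  | .min y, .maj x => y = x + 4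
  | .aug a, .aug b => a = b
  | _, _ => False

/-- The monoid `M_{U,P,L}` generated by the relations `U`, `P` and `L`. -/
def M : Submonoid RelM := Submonoid.closure {U, P, L}

lemma U_mem : U ∈ M := Submonoid.subset_closure (Set.mem_insert _ _)

lemma P_mem : P ∈ M :=
  Submonoid.subset_closure (Set.mem_insert_of_mem _ (Set.mem_insert _ _))

lemma L_mem : L ∈ M :=
  Submonoid.subset_closure (Set.mem_insert_of_mem _ (Set.mem_insert_of_mem _ rfl))



/-! ### Auxiliary machinery for the proof -/

def tlist : List Triad :=
  [.maj 0, .maj 1, .maj 2, .maj 3, .maj 4, .maj 5, .maj 6, .maj 7, .maj 8, .maj 9, .maj 10, .maj 11,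
   .min 0, .min 1, .min 2, .min 3, .min 4, .min 5, .min 6, .min 7, .min 8, .min 9, .min 10, .min 11,
   .aug 0, .aug 1, .aug 2, .aug 3]

lemma mem_tlist (t : Triad) : t ∈ tlist := by
  cases t with
  | maj x => revert x; decide
  | min x => revert x; decide
  | aug a => revert a; decide

instance : Fintype Triad where
  elems := ⟨tlist, by decide⟩
  complete := mem_tlist

abbrev BRel := Triad → Triad → Bool

def bmul (f g : BRel) : BRel := fun a b => tlist.any (fun r => f a r && g r b)

/-- A relation matrix given by difference-set data (all elements of `M` are
invariant under transposition). -/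
def M9 (mm mn nm nn : List (ZMod 12)) (ma am na an aa : List (ZMod 4)) : BRel :=
  fun s t => match s, t with
  | .maj x, .maj y => (y - x) ∈ mm
  | .maj x, .min y => (y - x) ∈ mn
  | .min x, .maj y => (y - x) ∈ nm
  | .min x, .min y => (y - x) ∈ nn
  | .maj x, .aug d => (d - (x.val : ZMod 4)) ∈ ma
  | .aug d, .maj x => ((x.val : ZMod 4) - d) ∈ am
  | .min x, .aug d => (d - (x.val : ZMod 4)) ∈ na
  | .aug d, .min x => ((x.val : ZMod 4) - d) ∈ an
  | .aug d, .aug e => (e - d) ∈ aa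

abbrev toRel (f : BRel) : RelM := fun a b => f a b = true

lemma mul_def (R S : RelM) : R * S = fun a b => ∃ r, R a r ∧ S r b := rfl

lemma toRel_mul (f g : BRel) : toRel f * toRel g = toRel (bmul f g) := by
  funext a b
  rw [mul_def]
  apply propext
  simp only [toRel, bmul, List.any_eq_true, Bool.and_eq_true]
  exact ⟨fun ⟨r, h1, h2⟩ => ⟨r, mem_tlist r, h1, h2⟩, fun ⟨r, _, h1, h2⟩ => ⟨r, h1, h2⟩⟩

lemma toRel_inj {f g : BRel} (h : toRel f = toRel g) : f = g := by
  funext a b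
  have h2 := congrFun (congrFun h a) b
  simp only [toRel, eq_iff_iff] at h2
  cases hf : f a b <;> cases hg : g a b <;> simp [hf, hg] at h2 ⊢

def wd : List (Fin 3) → FreeMonoid (Fin 3) := FreeMonoid.ofList

def gRel : Fin 3 → RelM := ![U, P, L]

def ff : FreeMonoid (Fin 3) →* RelM := FreeMonoid.lift gRel
def mx0 : BRel := M9 [0] [] [] [0] [] [] [] [] [0]
def mx1 : BRel := M9 [] [] [] [] [0] [0] [3] [1] []
def mx2 : BRel := M9 [] [0] [0] [] [] [] [] [] [0]
def mx3 : BRel := M9 [] [4] [8] [] [] [] [] [] [0]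
def mx4 : BRel := M9 [4] [] [] [8] [] [] [] [] [0]
def mx5 : BRel := M9 [] [] [] [] [3] [0] [0] [1] []
def mx6 : BRel := M9 [8] [] [] [4] [] [] [] [] [0]
def mx7 : BRel := M9 [] [] [] [] [0] [1] [3] [0] []
def mx8 : BRel := M9 [0,4,8] [1,5,9] [3,7,11] [0,4,8] [] [] [] [] [0]
def mx9 : BRel := M9 [] [8] [4] [] [] [] [] [] [0]
def mx10 : BRel := M9 [] [] [] [] [3] [1] [0] [0] []
def mx11 : BRel := M9 [3,7,11] [0,4,8] [0,4,8] [1,5,9] [] [] [] [] [0]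
def mx12 : BRel := M9 [0,4,8] [1,5,9] [3,7,11] [0,4,8] [] [] [] [] [1,3]
def mx13 : BRel := M9 [1,5,9] [0,4,8] [0,4,8] [3,7,11] [] [] [] [] [0]
def mx14 : BRel := M9 [3,7,11] [0,4,8] [0,4,8] [1,5,9] [] [] [] [] [1,3]
def mx15 : BRel := M9 [0,4,8] [3,7,11] [1,5,9] [0,4,8] [] [] [] [] [0]
def mx16 : BRel := M9 [1,5,9] [0,4,8] [0,4,8] [3,7,11] [] [] [] [] [1,3]
def mx17 : BRel := M9 [] [] [] [] [0] [1,3] [3] [0,2] []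
def mx18 : BRel := M9 [] [] [] [] [1,3] [0] [0,2] [1] []
def mx19 : BRel := M9 [0,4,8] [3,7,11] [1,5,9] [0,4,8] [] [] [] [] [1,3]
def mx20 : BRel := M9 [] [] [] [] [3] [1,3] [0] [0,2] []
def mx21 : BRel := M9 [] [] [] [] [0,2] [0] [1,3] [1] []
def mx22 : BRel := M9 [] [] [] [] [1,3] [1,3] [0,2] [0,2] []
def mx23 : BRel := M9 [] [] [] [] [0] [0,2] [3] [1,3] []
def mx24 : BRel := M9 [] [] [] [] [1,3] [1] [0,2] [0] []
def mx25 : BRel := M9 [1,3,5,7,9,11] [0,2,4,6,8,10] [0,2,4,6,8,10] [1,3,5,7,9,11] [] [] [] [] [0]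
def mx26 : BRel := M9 [] [] [] [] [0,2] [1,3] [1,3] [0,2] []
def mx27 : BRel := M9 [] [] [] [] [3] [0,2] [0] [1,3] []
def mx28 : BRel := M9 [] [] [] [] [0,2] [1] [1,3] [0] []
def mx29 : BRel := M9 [0,2,4,6,8,10] [1,3,5,7,9,11] [1,3,5,7,9,11] [0,2,4,6,8,10] [] [] [] [] [0]
def mx30 : BRel := M9 [] [] [] [] [1,3] [0,2] [0,2] [1,3] []
def mx31 : BRel := M9 [1,3,5,7,9,11] [0,2,4,6,8,10] [0,2,4,6,8,10] [1,3,5,7,9,11] [] [] [] [] [1,3]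
def mx32 : BRel := M9 [0,4,8] [1,5,9] [3,7,11] [0,4,8] [] [] [] [] [0,2]
def mx33 : BRel := M9 [] [] [] [] [0,2] [0,2] [1,3] [1,3] []
def mx34 : BRel := M9 [0,2,4,6,8,10] [1,3,5,7,9,11] [1,3,5,7,9,11] [0,2,4,6,8,10] [] [] [] [] [1,3]
def mx35 : BRel := M9 [3,7,11] [0,4,8] [0,4,8] [1,5,9] [] [] [] [] [0,2]
def mx36 : BRel := M9 [1,3,5,7,9,11] [0,2,4,6,8,10] [0,2,4,6,8,10] [1,3,5,7,9,11] [] [] [] [] [0,2]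
def mx37 : BRel := M9 [1,5,9] [0,4,8] [0,4,8] [3,7,11] [] [] [] [] [0,2]
def mx38 : BRel := M9 [0,4,8] [3,7,11] [1,5,9] [0,4,8] [] [] [] [] [0,2]
def mx39 : BRel := M9 [0,2,4,6,8,10] [1,3,5,7,9,11] [1,3,5,7,9,11] [0,2,4,6,8,10] [] [] [] [] [0,2]

instance : ∀ s t, Decidable (U s t) := fun s t =>
  match s, t with
  | .aug a, .maj x => inferInstanceAs (Decidable (_ = _))
  | .maj x, .aug a => inferInstanceAs (Decidable (_ = _))
  | .aug a, .min x => inferInstanceAs (Decidable (_ = _))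
  | .min x, .aug a => inferInstanceAs (Decidable (_ = _))
  | .maj _, .maj _ => inferInstanceAs (Decidable False)
  | .maj _, .min _ => inferInstanceAs (Decidable False)
  | .min _, .maj _ => inferInstanceAs (Decidable False)
  | .min _, .min _ => inferInstanceAs (Decidable False)
  | .aug _, .aug _ => inferInstanceAs (Decidable False)

instance : ∀ s t, Decidable (P s t) := fun s t =>
  match s, t with
  | .maj _, .min _ => inferInstanceAs (Decidable (_ = _))
  | .min _, .maj _ => inferInstanceAs (Decidable (_ = _))
  | .aug _, .aug _ => inferInstanceAs (Decidable (_ = _))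
  | .maj _, .maj _ => inferInstanceAs (Decidable False)
  | .min _, .min _ => inferInstanceAs (Decidable False)
  | .maj _, .aug _ => inferInstanceAs (Decidable False)
  | .aug _, .maj _ => inferInstanceAs (Decidable False)
  | .min _, .aug _ => inferInstanceAs (Decidable False)
  | .aug _, .min _ => inferInstanceAs (Decidable False)

instance : ∀ s t, Decidable (L s t) := fun s t =>
  match s, t with
  | .maj _, .min _ => inferInstanceAs (Decidable (_ = _))
  | .min _, .maj _ => inferInstanceAs (Decidable (_ = _))
  | .aug _, .aug _ => inferInstanceAs (Decidable (_ = _))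
  | .maj _, .maj _ => inferInstanceAs (Decidable False)
  | .min _, .min _ => inferInstanceAs (Decidable False)
  | .maj _, .aug _ => inferInstanceAs (Decidable False)
  | .aug _, .maj _ => inferInstanceAs (Decidable False)
  | .min _, .aug _ => inferInstanceAs (Decidable False)
  | .aug _, .min _ => inferInstanceAs (Decidable False)

lemma U_eq : U = toRel mx1 := by
  funext s t
  apply propext
  revert s t
  decide

lemma P_eq : P = toRel mx2 := by
  funext s t
  apply propext
  revert s t
  decide

lemma L_eq : L = toRel mx3 := by
  funext s t
  apply propext
  revert s t
  decide

lemma one_eq : (1 : RelM) = toRel mx0 := by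
  funext s t
  apply propext
  show s = t ↔ _
  revert s t
  decide

lemma ff_one : ff (wd []) = toRel mx0 := by
  rw [show wd [] = (1 : FreeMonoid (Fin 3)) from rfl, map_one, one_eq]

lemma hgen0 : ff (FreeMonoid.of 0) = toRel mx1 :=
  (FreeMonoid.lift_eval_of gRel 0).trans (show gRel 0 = toRel mx1 from U_eq)

lemma hgen1 : ff (FreeMonoid.of 1) = toRel mx2 :=
  (FreeMonoid.lift_eval_of gRel 1).trans (show gRel 1 = toRel mx2 from P_eq)

lemma hgen2 : ff (FreeMonoid.of 2) = toRel mx3 :=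
  (FreeMonoid.lift_eval_of gRel 2).trans (show gRel 2 = toRel mx3 from L_eq)
/-- The abstract generators `u`, `p`, `l` in the free monoid on three letters. -/
def u : FreeMonoid (Fin 3) := FreeMonoid.of 0
def p : FreeMonoid (Fin 3) := FreeMonoid.of 1
def l : FreeMonoid (Fin 3) := FreeMonoid.of 2

/-- The defining relations of the presentation of `M_{U,P,L}`. -/
def rels : FreeMonoid (Fin 3) → FreeMonoid (Fin 3) → Prop := fun a b =>
  (a = p * p ∧ b = 1) ∨
  (a = l * l ∧ b = 1) ∨
  (a = l * p * l ∧ b = p * l * p) ∨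
  (a = u * u * u ∧ b = u) ∨
  (a = u * p ∧ b = u * l) ∨
  (a = p * u ∧ b = l * u) ∨
  (a = u ^ 2 * p * u ^ 2 ∧ b = p * u ^ 2 * p * u ^ 2 * p) ∨
  (a = (u * p) ^ 2 * u ^ 2 ∧ b = p * (u * p) ^ 2 * u ^ 2 * p) ∨
  (a = u ^ 2 * (p * u) ^ 2 ∧ b = p * u ^ 2 * (p * u) ^ 2 * p)

/-- The monoid presented by `u`, `p`, `l` with the relations above, i.e. the quotient of
the free monoid on three generators by the congruence generated by the relations. -/
abbrev PresUPL := (conGen rels).Quotient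


abbrev c : Con (FreeMonoid (Fin 3)) := conGen rels

lemma cstep (A B : FreeMonoid (Fin 3)) {x y : FreeMonoid (Fin 3)} (h : c x y) :
    c (A * x * B) (A * y * B) :=
  c.mul (c.mul (c.refl A) h) (c.refl B)

lemma r0 : c (p * p) 1 := ConGen.Rel.of _ _ (Or.inl ⟨rfl, rfl⟩)
lemma r1 : c (l * l) 1 := ConGen.Rel.of _ _ (Or.inr (Or.inl ⟨rfl, rfl⟩))
lemma r2 : c (l * p * l) (p * l * p) := ConGen.Rel.of _ _ (Or.inr (Or.inr (Or.inl ⟨rfl, rfl⟩)))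
lemma r3 : c (u * u * u) u := ConGen.Rel.of _ _ (Or.inr (Or.inr (Or.inr (Or.inl ⟨rfl, rfl⟩))))
lemma r4 : c (u * p) (u * l) := ConGen.Rel.of _ _ (Or.inr (Or.inr (Or.inr (Or.inr (Or.inl ⟨rfl, rfl⟩)))))
lemma r5 : c (p * u) (l * u) := ConGen.Rel.of _ _ (Or.inr (Or.inr (Or.inr (Or.inr (Or.inr (Or.inl ⟨rfl, rfl⟩))))))
lemma r6 : c (u ^ 2 * p * u ^ 2) (p * u ^ 2 * p * u ^ 2 * p) :=
  ConGen.Rel.of _ _ (Or.inr (Or.inr (Or.inr (Or.inr (Or.inr (Or.inr (Or.inl ⟨rfl, rfl⟩)))))))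
lemma r7 : c ((u * p) ^ 2 * u ^ 2) (p * (u * p) ^ 2 * u ^ 2 * p) :=
  ConGen.Rel.of _ _ (Or.inr (Or.inr (Or.inr (Or.inr (Or.inr (Or.inr (Or.inr (Or.inl ⟨rfl, rfl⟩))))))))
lemma r8 : c (u ^ 2 * (p * u) ^ 2) (p * u ^ 2 * (p * u) ^ 2 * p) :=
  ConGen.Rel.of _ _ (Or.inr (Or.inr (Or.inr (Or.inr (Or.inr (Or.inr (Or.inr (Or.inr ⟨rfl, rfl⟩))))))))

def g0 : Fin 3 → M := ![⟨U, U_mem⟩, ⟨P, P_mem⟩, ⟨L, L_mem⟩]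

def f0 : FreeMonoid (Fin 3) →* M := FreeMonoid.lift g0

lemma val_f0 (x : FreeMonoid (Fin 3)) : ((f0 x : M) : RelM) = ff x := by
  have h : M.subtype.comp f0 = ff := FreeMonoid.hom_eq (by intro i; fin_cases i <;> rfl)
  exact DFunLike.congr_fun h x
lemma e0 : bmul mx0 mx3 = mx3 := by decide
lemma e1 : bmul mx0 mx2 = mx2 := by decide
lemma e2 : bmul mx0 mx1 = mx1 := by decide
lemma e3 : bmul mx3 mx3 = mx0 := by decide
lemma e4 : bmul mx3 mx2 = mx4 := by decide
lemma e5 : bmul mx3 mx1 = mx5 := by decide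
lemma e6 : bmul mx2 mx3 = mx6 := by decide
lemma e7 : bmul mx2 mx2 = mx0 := by decide
lemma e8 : bmul mx2 mx1 = mx5 := by decide
lemma e9 : bmul mx1 mx3 = mx7 := by decide
lemma e10 : bmul mx1 mx2 = mx7 := by decide
lemma e11 : bmul mx1 mx1 = mx8 := by decide
lemma e12 : bmul mx4 mx3 = mx9 := by decide
lemma e13 : bmul mx6 mx2 = mx9 := by decide
lemma e14 : bmul mx5 mx2 = mx10 := by decide
lemma e15 : bmul mx5 mx1 = mx11 := by decide
lemma e16 : bmul mx7 mx1 = mx12 := by decide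
lemma e17 : bmul mx8 mx2 = mx13 := by decide
lemma e18 : bmul mx8 mx1 = mx1 := by decide
lemma e19 : bmul mx10 mx1 = mx14 := by decide
lemma e20 : bmul mx11 mx2 = mx15 := by decide
lemma e21 : bmul mx12 mx2 = mx16 := by decide
lemma e22 : bmul mx12 mx1 = mx17 := by decide
lemma e23 : bmul mx13 mx1 = mx18 := by decide
lemma e24 : bmul mx14 mx2 = mx19 := by decide
lemma e25 : bmul mx14 mx1 = mx20 := by decide
lemma e26 : bmul mx15 mx1 = mx21 := by decide
lemma e27 : bmul mx16 mx1 = mx22 := by decide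
lemma e28 : bmul mx17 mx2 = mx23 := by decide
lemma e29 : bmul mx18 mx2 = mx24 := by decide
lemma e30 : bmul mx18 mx1 = mx25 := by decide
lemma e31 : bmul mx19 mx1 = mx26 := by decide
lemma e32 : bmul mx20 mx2 = mx27 := by decide
lemma e33 : bmul mx21 mx2 = mx28 := by decide
lemma e34 : bmul mx21 mx1 = mx29 := by decide
lemma e35 : bmul mx22 mx2 = mx30 := by decide
lemma e36 : bmul mx22 mx1 = mx31 := by decide
lemma e37 : bmul mx23 mx1 = mx32 := by decide
lemma e38 : bmul mx24 mx1 = mx31 := by decide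
lemma e39 : bmul mx25 mx2 = mx29 := by decide
lemma e40 : bmul mx26 mx2 = mx33 := by decide
lemma e41 : bmul mx26 mx1 = mx34 := by decide
lemma e42 : bmul mx27 mx1 = mx35 := by decide
lemma e43 : bmul mx28 mx1 = mx34 := by decide
lemma e44 : bmul mx29 mx2 = mx25 := by decide
lemma e45 : bmul mx30 mx1 = mx36 := by decide
lemma e46 : bmul mx32 mx2 = mx37 := by decide
lemma e47 : bmul mx31 mx2 = mx34 := by decide
lemma e48 : bmul mx34 mx2 = mx31 := by decide
lemma e49 : bmul mx35 mx2 = mx38 := by decide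
lemma e50 : bmul mx36 mx2 = mx39 := by decide

lemma F_nil : ff (wd []) = toRel mx0 := ff_one
lemma F_l : ff (wd [2]) = toRel mx3 := by
  rw [show wd [2] = wd [] * FreeMonoid.of 2 from rfl, map_mul, F_nil, hgen2, toRel_mul, e0]
lemma F_p : ff (wd [1]) = toRel mx2 := by
  rw [show wd [1] = wd [] * FreeMonoid.of 1 from rfl, map_mul, F_nil, hgen1, toRel_mul, e1]
lemma F_u : ff (wd [0]) = toRel mx1 := by
  rw [show wd [0] = wd [] * FreeMonoid.of 0 from rfl, map_mul, F_nil, hgen0, toRel_mul, e2]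
lemma F_ll : ff (wd [2,2]) = toRel mx0 := by
  rw [show wd [2,2] = wd [2] * FreeMonoid.of 2 from rfl, map_mul, F_l, hgen2, toRel_mul, e3]
lemma F_lp : ff (wd [2,1]) = toRel mx4 := by
  rw [show wd [2,1] = wd [2] * FreeMonoid.of 1 from rfl, map_mul, F_l, hgen1, toRel_mul, e4]
lemma F_lu : ff (wd [2,0]) = toRel mx5 := by
  rw [show wd [2,0] = wd [2] * FreeMonoid.of 0 from rfl, map_mul, F_l, hgen0, toRel_mul, e5]
lemma F_pl : ff (wd [1,2]) = toRel mx6 := by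
  rw [show wd [1,2] = wd [1] * FreeMonoid.of 2 from rfl, map_mul, F_p, hgen2, toRel_mul, e6]
lemma F_pp : ff (wd [1,1]) = toRel mx0 := by
  rw [show wd [1,1] = wd [1] * FreeMonoid.of 1 from rfl, map_mul, F_p, hgen1, toRel_mul, e7]
lemma F_pu : ff (wd [1,0]) = toRel mx5 := by
  rw [show wd [1,0] = wd [1] * FreeMonoid.of 0 from rfl, map_mul, F_p, hgen0, toRel_mul, e8]
lemma F_ul : ff (wd [0,2]) = toRel mx7 := by
  rw [show wd [0,2] = wd [0] * FreeMonoid.of 2 from rfl, map_mul, F_u, hgen2, toRel_mul, e9]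
lemma F_up : ff (wd [0,1]) = toRel mx7 := by
  rw [show wd [0,1] = wd [0] * FreeMonoid.of 1 from rfl, map_mul, F_u, hgen1, toRel_mul, e10]
lemma F_uu : ff (wd [0,0]) = toRel mx8 := by
  rw [show wd [0,0] = wd [0] * FreeMonoid.of 0 from rfl, map_mul, F_u, hgen0, toRel_mul, e11]
lemma F_lpl : ff (wd [2,1,2]) = toRel mx9 := by
  rw [show wd [2,1,2] = wd [2,1] * FreeMonoid.of 2 from rfl, map_mul, F_lp, hgen2, toRel_mul, e12]
lemma F_plp : ff (wd [1,2,1]) = toRel mx9 := by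
  rw [show wd [1,2,1] = wd [1,2] * FreeMonoid.of 1 from rfl, map_mul, F_pl, hgen1, toRel_mul, e13]
lemma F_pup : ff (wd [1,0,1]) = toRel mx10 := by
  rw [show wd [1,0,1] = wd [1,0] * FreeMonoid.of 1 from rfl, map_mul, F_pu, hgen1, toRel_mul, e14]
lemma F_puu : ff (wd [1,0,0]) = toRel mx11 := by
  rw [show wd [1,0,0] = wd [1,0] * FreeMonoid.of 0 from rfl, map_mul, F_pu, hgen0, toRel_mul, e15]
lemma F_upu : ff (wd [0,1,0]) = toRel mx12 := by
  rw [show wd [0,1,0] = wd [0,1] * FreeMonoid.of 0 from rfl, map_mul, F_up, hgen0, toRel_mul, e16]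
lemma F_uup : ff (wd [0,0,1]) = toRel mx13 := by
  rw [show wd [0,0,1] = wd [0,0] * FreeMonoid.of 1 from rfl, map_mul, F_uu, hgen1, toRel_mul, e17]
lemma F_uuu : ff (wd [0,0,0]) = toRel mx1 := by
  rw [show wd [0,0,0] = wd [0,0] * FreeMonoid.of 0 from rfl, map_mul, F_uu, hgen0, toRel_mul, e18]
lemma F_pupu : ff (wd [1,0,1,0]) = toRel mx14 := by
  rw [show wd [1,0,1,0] = wd [1,0,1] * FreeMonoid.of 0 from rfl, map_mul, F_pup, hgen0, toRel_mul, e19]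
lemma F_puup : ff (wd [1,0,0,1]) = toRel mx15 := by
  rw [show wd [1,0,0,1] = wd [1,0,0] * FreeMonoid.of 1 from rfl, map_mul, F_puu, hgen1, toRel_mul, e20]
lemma F_upup : ff (wd [0,1,0,1]) = toRel mx16 := by
  rw [show wd [0,1,0,1] = wd [0,1,0] * FreeMonoid.of 1 from rfl, map_mul, F_upu, hgen1, toRel_mul, e21]
lemma F_upuu : ff (wd [0,1,0,0]) = toRel mx17 := by
  rw [show wd [0,1,0,0] = wd [0,1,0] * FreeMonoid.of 0 from rfl, map_mul, F_upu, hgen0, toRel_mul, e22]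
lemma F_uupu : ff (wd [0,0,1,0]) = toRel mx18 := by
  rw [show wd [0,0,1,0] = wd [0,0,1] * FreeMonoid.of 0 from rfl, map_mul, F_uup, hgen0, toRel_mul, e23]
lemma F_pupup : ff (wd [1,0,1,0,1]) = toRel mx19 := by
  rw [show wd [1,0,1,0,1] = wd [1,0,1,0] * FreeMonoid.of 1 from rfl, map_mul, F_pupu, hgen1, toRel_mul, e24]
lemma F_pupuu : ff (wd [1,0,1,0,0]) = toRel mx20 := by
  rw [show wd [1,0,1,0,0] = wd [1,0,1,0] * FreeMonoid.of 0 from rfl, map_mul, F_pupu, hgen0, toRel_mul, e25]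
lemma F_puupu : ff (wd [1,0,0,1,0]) = toRel mx21 := by
  rw [show wd [1,0,0,1,0] = wd [1,0,0,1] * FreeMonoid.of 0 from rfl, map_mul, F_puup, hgen0, toRel_mul, e26]
lemma F_upupu : ff (wd [0,1,0,1,0]) = toRel mx22 := by
  rw [show wd [0,1,0,1,0] = wd [0,1,0,1] * FreeMonoid.of 0 from rfl, map_mul, F_upup, hgen0, toRel_mul, e27]
lemma F_upuup : ff (wd [0,1,0,0,1]) = toRel mx23 := by
  rw [show wd [0,1,0,0,1] = wd [0,1,0,0] * FreeMonoid.of 1 from rfl, map_mul, F_upuu, hgen1, toRel_mul, e28]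
lemma F_uupup : ff (wd [0,0,1,0,1]) = toRel mx24 := by
  rw [show wd [0,0,1,0,1] = wd [0,0,1,0] * FreeMonoid.of 1 from rfl, map_mul, F_uupu, hgen1, toRel_mul, e29]
lemma F_uupuu : ff (wd [0,0,1,0,0]) = toRel mx25 := by
  rw [show wd [0,0,1,0,0] = wd [0,0,1,0] * FreeMonoid.of 0 from rfl, map_mul, F_uupu, hgen0, toRel_mul, e30]
lemma F_pupupu : ff (wd [1,0,1,0,1,0]) = toRel mx26 := by
  rw [show wd [1,0,1,0,1,0] = wd [1,0,1,0,1] * FreeMonoid.of 0 from rfl, map_mul, F_pupup, hgen0, toRel_mul, e31]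
lemma F_pupuup : ff (wd [1,0,1,0,0,1]) = toRel mx27 := by
  rw [show wd [1,0,1,0,0,1] = wd [1,0,1,0,0] * FreeMonoid.of 1 from rfl, map_mul, F_pupuu, hgen1, toRel_mul, e32]
lemma F_puupup : ff (wd [1,0,0,1,0,1]) = toRel mx28 := by
  rw [show wd [1,0,0,1,0,1] = wd [1,0,0,1,0] * FreeMonoid.of 1 from rfl, map_mul, F_puupu, hgen1, toRel_mul, e33]
lemma F_puupuu : ff (wd [1,0,0,1,0,0]) = toRel mx29 := by
  rw [show wd [1,0,0,1,0,0] = wd [1,0,0,1,0] * FreeMonoid.of 0 from rfl, map_mul, F_puupu, hgen0, toRel_mul, e34]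
lemma F_upupup : ff (wd [0,1,0,1,0,1]) = toRel mx30 := by
  rw [show wd [0,1,0,1,0,1] = wd [0,1,0,1,0] * FreeMonoid.of 1 from rfl, map_mul, F_upupu, hgen1, toRel_mul, e35]
lemma F_upupuu : ff (wd [0,1,0,1,0,0]) = toRel mx31 := by
  rw [show wd [0,1,0,1,0,0] = wd [0,1,0,1,0] * FreeMonoid.of 0 from rfl, map_mul, F_upupu, hgen0, toRel_mul, e36]
lemma F_upuupu : ff (wd [0,1,0,0,1,0]) = toRel mx32 := by
  rw [show wd [0,1,0,0,1,0] = wd [0,1,0,0,1] * FreeMonoid.of 0 from rfl, map_mul, F_upuup, hgen0, toRel_mul, e37]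
lemma F_uupupu : ff (wd [0,0,1,0,1,0]) = toRel mx31 := by
  rw [show wd [0,0,1,0,1,0] = wd [0,0,1,0,1] * FreeMonoid.of 0 from rfl, map_mul, F_uupup, hgen0, toRel_mul, e38]
lemma F_uupuup : ff (wd [0,0,1,0,0,1]) = toRel mx29 := by
  rw [show wd [0,0,1,0,0,1] = wd [0,0,1,0,0] * FreeMonoid.of 1 from rfl, map_mul, F_uupuu, hgen1, toRel_mul, e39]
lemma F_pupupup : ff (wd [1,0,1,0,1,0,1]) = toRel mx33 := by
  rw [show wd [1,0,1,0,1,0,1] = wd [1,0,1,0,1,0] * FreeMonoid.of 1 from rfl, map_mul, F_pupupu, hgen1, toRel_mul, e40]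
lemma F_pupupuu : ff (wd [1,0,1,0,1,0,0]) = toRel mx34 := by
  rw [show wd [1,0,1,0,1,0,0] = wd [1,0,1,0,1,0] * FreeMonoid.of 0 from rfl, map_mul, F_pupupu, hgen0, toRel_mul, e41]
lemma F_pupuupu : ff (wd [1,0,1,0,0,1,0]) = toRel mx35 := by
  rw [show wd [1,0,1,0,0,1,0] = wd [1,0,1,0,0,1] * FreeMonoid.of 0 from rfl, map_mul, F_pupuup, hgen0, toRel_mul, e42]
lemma F_puupupu : ff (wd [1,0,0,1,0,1,0]) = toRel mx34 := by
  rw [show wd [1,0,0,1,0,1,0] = wd [1,0,0,1,0,1] * FreeMonoid.of 0 from rfl, map_mul, F_puupup, hgen0, toRel_mul, e43]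
lemma F_puupuup : ff (wd [1,0,0,1,0,0,1]) = toRel mx25 := by
  rw [show wd [1,0,0,1,0,0,1] = wd [1,0,0,1,0,0] * FreeMonoid.of 1 from rfl, map_mul, F_puupuu, hgen1, toRel_mul, e44]
lemma F_upupupu : ff (wd [0,1,0,1,0,1,0]) = toRel mx36 := by
  rw [show wd [0,1,0,1,0,1,0] = wd [0,1,0,1,0,1] * FreeMonoid.of 0 from rfl, map_mul, F_upupup, hgen0, toRel_mul, e45]
lemma F_upuupup : ff (wd [0,1,0,0,1,0,1]) = toRel mx37 := by
  rw [show wd [0,1,0,0,1,0,1] = wd [0,1,0,0,1,0] * FreeMonoid.of 1 from rfl, map_mul, F_upuupu, hgen1, toRel_mul, e46]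
lemma F_uupupup : ff (wd [0,0,1,0,1,0,1]) = toRel mx34 := by
  rw [show wd [0,0,1,0,1,0,1] = wd [0,0,1,0,1,0] * FreeMonoid.of 1 from rfl, map_mul, F_uupupu, hgen1, toRel_mul, e47]
lemma F_pupupuup : ff (wd [1,0,1,0,1,0,0,1]) = toRel mx31 := by
  rw [show wd [1,0,1,0,1,0,0,1] = wd [1,0,1,0,1,0,0] * FreeMonoid.of 1 from rfl, map_mul, F_pupupuu, hgen1, toRel_mul, e48]
lemma F_pupuupup : ff (wd [1,0,1,0,0,1,0,1]) = toRel mx38 := by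
  rw [show wd [1,0,1,0,0,1,0,1] = wd [1,0,1,0,0,1,0] * FreeMonoid.of 1 from rfl, map_mul, F_pupuupu, hgen1, toRel_mul, e49]
lemma F_puupupup : ff (wd [1,0,0,1,0,1,0,1]) = toRel mx31 := by
  rw [show wd [1,0,0,1,0,1,0,1] = wd [1,0,0,1,0,1,0] * FreeMonoid.of 1 from rfl, map_mul, F_puupupu, hgen1, toRel_mul, e48]
lemma F_upupupup : ff (wd [0,1,0,1,0,1,0,1]) = toRel mx39 := by
  rw [show wd [0,1,0,1,0,1,0,1] = wd [0,1,0,1,0,1,0] * FreeMonoid.of 1 from rfl, map_mul, F_upupupu, hgen1, toRel_mul, e50]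

lemma cg_0_0 : c (wd [0]) (wd [0]) := c.refl _
lemma cg_0_1 : c (wd [1]) (wd [1]) := c.refl _
lemma cg_0_2 : c (wd [2]) (wd [2]) := c.refl _
lemma cg_1_0 : c (wd [0,0]) (wd [0,0]) := c.refl _
lemma cg_1_1 : c (wd [0,1]) (wd [0,1]) := c.refl _
lemma cg_1_2 : c (wd [0,2]) (wd [0,1]) := (cstep (wd []) (wd []) (c.symm r4) : c (wd [0,2]) (wd [0,1]))
lemma cg_2_0 : c (wd [1,0]) (wd [1,0]) := c.refl _
lemma cg_2_1 : c (wd [1,1]) (wd []) := (cstep (wd []) (wd []) r0 : c (wd [1,1]) (wd []))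
lemma cg_2_2 : c (wd [1,2]) (wd [1,2]) := c.refl _
lemma cg_3_0 : c (wd [2,0]) (wd [1,0]) := (cstep (wd []) (wd []) (c.symm r5) : c (wd [2,0]) (wd [1,0]))
lemma cg_3_1 : c (wd [2,1]) (wd [2,1]) := c.refl _
lemma cg_3_2 : c (wd [2,2]) (wd []) := (cstep (wd []) (wd []) r1 : c (wd [2,2]) (wd []))
lemma cg_4_0 : c (wd [0,0,0]) (wd [0]) := (cstep (wd []) (wd []) r3 : c (wd [0,0,0]) (wd [0]))
lemma cg_4_1 : c (wd [0,0,1]) (wd [0,0,1]) := c.refl _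
lemma cg_4_2 : c (wd [0,0,2]) (wd [0,0,1]) := (cstep (wd [0]) (wd []) (c.symm r4) : c (wd [0,0,2]) (wd [0,0,1]))
lemma cg_5_0 : c (wd [0,1,0]) (wd [0,1,0]) := c.refl _
lemma cg_5_1 : c (wd [0,1,1]) (wd [0]) := (cstep (wd [0]) (wd []) r0 : c (wd [0,1,1]) (wd [0]))
lemma cg_5_2 : c (wd [0,1,2]) (wd [0]) := (c.trans (cstep (wd []) (wd [2]) r4 : c (wd [0,1,2]) (wd [0,2,2])) (cstep (wd [0]) (wd []) r1 : c (wd [0,2,2]) (wd [0])))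
lemma cg_6_0 : c (wd [1,0,0]) (wd [1,0,0]) := c.refl _
lemma cg_6_1 : c (wd [1,0,1]) (wd [1,0,1]) := c.refl _
lemma cg_6_2 : c (wd [1,0,2]) (wd [1,0,1]) := (cstep (wd [1]) (wd []) (c.symm r4) : c (wd [1,0,2]) (wd [1,0,1]))
lemma cg_7_0 : c (wd [1,2,0]) (wd [0]) := (c.trans (cstep (wd [1]) (wd []) (c.symm r5) : c (wd [1,2,0]) (wd [1,1,0])) (cstep (wd []) (wd [0]) r0 : c (wd [1,1,0]) (wd [0])))
lemma cg_7_1 : c (wd [1,2,1]) (wd [1,2,1]) := c.refl _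
lemma cg_7_2 : c (wd [1,2,2]) (wd [1]) := (cstep (wd [1]) (wd []) r1 : c (wd [1,2,2]) (wd [1]))
lemma cg_8_0 : c (wd [2,1,0]) (wd [0]) := (c.trans (cstep (wd [2]) (wd []) r5 : c (wd [2,1,0]) (wd [2,2,0])) (cstep (wd []) (wd [0]) r1 : c (wd [2,2,0]) (wd [0])))
lemma cg_8_1 : c (wd [2,1,1]) (wd [2]) := (cstep (wd [2]) (wd []) r0 : c (wd [2,1,1]) (wd [2]))
lemma cg_8_2 : c (wd [2,1,2]) (wd [1,2,1]) := (cstep (wd []) (wd []) r2 : c (wd [2,1,2]) (wd [1,2,1]))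
lemma cg_9_0 : c (wd [0,0,1,0]) (wd [0,0,1,0]) := c.refl _
lemma cg_9_1 : c (wd [0,0,1,1]) (wd [0,0]) := (cstep (wd [0,0]) (wd []) r0 : c (wd [0,0,1,1]) (wd [0,0]))
lemma cg_9_2 : c (wd [0,0,1,2]) (wd [0,0]) := (c.trans (cstep (wd [0]) (wd [2]) r4 : c (wd [0,0,1,2]) (wd [0,0,2,2])) (cstep (wd [0,0]) (wd []) r1 : c (wd [0,0,2,2]) (wd [0,0])))
lemma cg_10_0 : c (wd [0,1,0,0]) (wd [0,1,0,0]) := c.refl _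
lemma cg_10_1 : c (wd [0,1,0,1]) (wd [0,1,0,1]) := c.refl _
lemma cg_10_2 : c (wd [0,1,0,2]) (wd [0,1,0,1]) := (cstep (wd [0,1]) (wd []) (c.symm r4) : c (wd [0,1,0,2]) (wd [0,1,0,1]))
lemma cg_11_0 : c (wd [1,0,0,0]) (wd [1,0]) := (cstep (wd [1]) (wd []) r3 : c (wd [1,0,0,0]) (wd [1,0]))
lemma cg_11_1 : c (wd [1,0,0,1]) (wd [1,0,0,1]) := c.refl _
lemma cg_11_2 : c (wd [1,0,0,2]) (wd [1,0,0,1]) := (cstep (wd [1,0]) (wd []) (c.symm r4) : c (wd [1,0,0,2]) (wd [1,0,0,1]))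
lemma cg_12_0 : c (wd [1,0,1,0]) (wd [1,0,1,0]) := c.refl _
lemma cg_12_1 : c (wd [1,0,1,1]) (wd [1,0]) := (cstep (wd [1,0]) (wd []) r0 : c (wd [1,0,1,1]) (wd [1,0]))
lemma cg_12_2 : c (wd [1,0,1,2]) (wd [1,0]) := (c.trans (cstep (wd [1]) (wd [2]) r4 : c (wd [1,0,1,2]) (wd [1,0,2,2])) (cstep (wd [1,0]) (wd []) r1 : c (wd [1,0,2,2]) (wd [1,0])))
lemma cg_13_0 : c (wd [1,2,1,0]) (wd [1,0]) := (c.trans (cstep (wd [1,2]) (wd []) r5 : c (wd [1,2,1,0]) (wd [1,2,2,0])) (cstep (wd [1]) (wd [0]) r1 : c (wd [1,2,2,0]) (wd [1,0])))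
lemma cg_13_1 : c (wd [1,2,1,1]) (wd [1,2]) := (cstep (wd [1,2]) (wd []) r0 : c (wd [1,2,1,1]) (wd [1,2]))
lemma cg_13_2 : c (wd [1,2,1,2]) (wd [2,1]) := (c.trans (cstep (wd [1]) (wd []) r2 : c (wd [1,2,1,2]) (wd [1,1,2,1])) (cstep (wd []) (wd [2,1]) r0 : c (wd [1,1,2,1]) (wd [2,1])))
lemma cg_14_0 : c (wd [0,0,1,0,0]) (wd [0,0,1,0,0]) := c.refl _
lemma cg_14_1 : c (wd [0,0,1,0,1]) (wd [0,0,1,0,1]) := c.refl _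
lemma cg_14_2 : c (wd [0,0,1,0,2]) (wd [0,0,1,0,1]) := (cstep (wd [0,0,1]) (wd []) (c.symm r4) : c (wd [0,0,1,0,2]) (wd [0,0,1,0,1]))
lemma cg_15_0 : c (wd [0,1,0,0,0]) (wd [0,1,0]) := (cstep (wd [0,1]) (wd []) r3 : c (wd [0,1,0,0,0]) (wd [0,1,0]))
lemma cg_15_1 : c (wd [0,1,0,0,1]) (wd [0,1,0,0,1]) := c.refl _
lemma cg_15_2 : c (wd [0,1,0,0,2]) (wd [0,1,0,0,1]) := (cstep (wd [0,1,0]) (wd []) (c.symm r4) : c (wd [0,1,0,0,2]) (wd [0,1,0,0,1]))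
lemma cg_16_0 : c (wd [0,1,0,1,0]) (wd [0,1,0,1,0]) := c.refl _
lemma cg_16_1 : c (wd [0,1,0,1,1]) (wd [0,1,0]) := (cstep (wd [0,1,0]) (wd []) r0 : c (wd [0,1,0,1,1]) (wd [0,1,0]))
lemma cg_16_2 : c (wd [0,1,0,1,2]) (wd [0,1,0]) := (c.trans (cstep (wd [0,1]) (wd [2]) r4 : c (wd [0,1,0,1,2]) (wd [0,1,0,2,2])) (cstep (wd [0,1,0]) (wd []) r1 : c (wd [0,1,0,2,2]) (wd [0,1,0])))
lemma cg_17_0 : c (wd [1,0,0,1,0]) (wd [1,0,0,1,0]) := c.refl _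
lemma cg_17_1 : c (wd [1,0,0,1,1]) (wd [1,0,0]) := (cstep (wd [1,0,0]) (wd []) r0 : c (wd [1,0,0,1,1]) (wd [1,0,0]))
lemma cg_17_2 : c (wd [1,0,0,1,2]) (wd [1,0,0]) := (c.trans (cstep (wd [1,0]) (wd [2]) r4 : c (wd [1,0,0,1,2]) (wd [1,0,0,2,2])) (cstep (wd [1,0,0]) (wd []) r1 : c (wd [1,0,0,2,2]) (wd [1,0,0])))
lemma cg_18_0 : c (wd [1,0,1,0,0]) (wd [1,0,1,0,0]) := c.refl _
lemma cg_18_1 : c (wd [1,0,1,0,1]) (wd [1,0,1,0,1]) := c.refl _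
lemma cg_18_2 : c (wd [1,0,1,0,2]) (wd [1,0,1,0,1]) := (cstep (wd [1,0,1]) (wd []) (c.symm r4) : c (wd [1,0,1,0,2]) (wd [1,0,1,0,1]))
lemma cg_19_0 : c (wd [0,0,1,0,0,0]) (wd [0,0,1,0]) := (cstep (wd [0,0,1]) (wd []) r3 : c (wd [0,0,1,0,0,0]) (wd [0,0,1,0]))
lemma cg_19_1 : c (wd [0,0,1,0,0,1]) (wd [0,0,1,0,0,1]) := c.refl _
lemma cg_19_2 : c (wd [0,0,1,0,0,2]) (wd [0,0,1,0,0,1]) := (cstep (wd [0,0,1,0]) (wd []) (c.symm r4) : c (wd [0,0,1,0,0,2]) (wd [0,0,1,0,0,1]))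
lemma cg_20_0 : c (wd [0,0,1,0,1,0]) (wd [0,0,1,0,1,0]) := c.refl _
lemma cg_20_1 : c (wd [0,0,1,0,1,1]) (wd [0,0,1,0]) := (cstep (wd [0,0,1,0]) (wd []) r0 : c (wd [0,0,1,0,1,1]) (wd [0,0,1,0]))
lemma cg_20_2 : c (wd [0,0,1,0,1,2]) (wd [0,0,1,0]) := (c.trans (cstep (wd [0,0,1]) (wd [2]) r4 : c (wd [0,0,1,0,1,2]) (wd [0,0,1,0,2,2])) (cstep (wd [0,0,1,0]) (wd []) r1 : c (wd [0,0,1,0,2,2]) (wd [0,0,1,0])))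
lemma cg_21_0 : c (wd [0,1,0,0,1,0]) (wd [0,1,0,0,1,0]) := c.refl _
lemma cg_21_1 : c (wd [0,1,0,0,1,1]) (wd [0,1,0,0]) := (cstep (wd [0,1,0,0]) (wd []) r0 : c (wd [0,1,0,0,1,1]) (wd [0,1,0,0]))
lemma cg_21_2 : c (wd [0,1,0,0,1,2]) (wd [0,1,0,0]) := (c.trans (cstep (wd [0,1,0]) (wd [2]) r4 : c (wd [0,1,0,0,1,2]) (wd [0,1,0,0,2,2])) (cstep (wd [0,1,0,0]) (wd []) r1 : c (wd [0,1,0,0,2,2]) (wd [0,1,0,0])))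
lemma cg_22_0 : c (wd [0,1,0,1,0,0]) (wd [0,0,1,0,1,0]) := (c.trans (cstep (wd []) (wd [0,1,0,1,0,0]) (c.symm r0) : c (wd [0,1,0,1,0,0]) (wd [1,1,0,1,0,1,0,0])) (c.trans (cstep (wd [1,1]) (wd [1,0,1,0,0]) (c.symm r3) : c (wd [1,1,0,1,0,1,0,0]) (wd [1,1,0,0,0,1,0,1,0,0])) (c.trans (cstep (wd [1,1,0,0]) (wd []) r7 : c (wd [1,1,0,0,0,1,0,1,0,0]) (wd [1,1,0,0,1,0,1,0,1,0,0,1])) (c.trans (cstep (wd [1]) (wd [0,0,1]) (c.symm r8) : c (wd [1,1,0,0,1,0,1,0,1,0,0,1]) (wd [1,0,0,1,0,1,0,0,0,1])) (c.trans (cstep (wd [1,0,0,1,0,1]) (wd [1]) r3 : c (wd [1,0,0,1,0,1,0,0,0,1]) (wd [1,0,0,1,0,1,0,1])) (cstep (wd []) (wd []) (c.symm r8) : c (wd [1,0,0,1,0,1,0,1]) (wd [0,0,1,0,1,0])))))))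
lemma cg_22_1 : c (wd [0,1,0,1,0,1]) (wd [0,1,0,1,0,1]) := c.refl _
lemma cg_22_2 : c (wd [0,1,0,1,0,2]) (wd [0,1,0,1,0,1]) := (cstep (wd [0,1,0,1]) (wd []) (c.symm r4) : c (wd [0,1,0,1,0,2]) (wd [0,1,0,1,0,1]))
lemma cg_23_0 : c (wd [1,0,0,1,0,0]) (wd [0,0,1,0,0,1]) := (c.trans (cstep (wd [1,0,0,1,0,0]) (wd []) (c.symm r0) : c (wd [1,0,0,1,0,0]) (wd [1,0,0,1,0,0,1,1])) (cstep (wd []) (wd [1]) (c.symm r6) : c (wd [1,0,0,1,0,0,1,1]) (wd [0,0,1,0,0,1])))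
lemma cg_23_1 : c (wd [1,0,0,1,0,1]) (wd [1,0,0,1,0,1]) := c.refl _
lemma cg_23_2 : c (wd [1,0,0,1,0,2]) (wd [1,0,0,1,0,1]) := (cstep (wd [1,0,0,1]) (wd []) (c.symm r4) : c (wd [1,0,0,1,0,2]) (wd [1,0,0,1,0,1]))
lemma cg_24_0 : c (wd [1,0,1,0,0,0]) (wd [1,0,1,0]) := (cstep (wd [1,0,1]) (wd []) r3 : c (wd [1,0,1,0,0,0]) (wd [1,0,1,0]))
lemma cg_24_1 : c (wd [1,0,1,0,0,1]) (wd [1,0,1,0,0,1]) := c.refl _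
lemma cg_24_2 : c (wd [1,0,1,0,0,2]) (wd [1,0,1,0,0,1]) := (cstep (wd [1,0,1,0]) (wd []) (c.symm r4) : c (wd [1,0,1,0,0,2]) (wd [1,0,1,0,0,1]))
lemma cg_25_0 : c (wd [1,0,1,0,1,0]) (wd [1,0,1,0,1,0]) := c.refl _
lemma cg_25_1 : c (wd [1,0,1,0,1,1]) (wd [1,0,1,0]) := (cstep (wd [1,0,1,0]) (wd []) r0 : c (wd [1,0,1,0,1,1]) (wd [1,0,1,0]))
lemma cg_25_2 : c (wd [1,0,1,0,1,2]) (wd [1,0,1,0]) := (c.trans (cstep (wd [1,0,1]) (wd [2]) r4 : c (wd [1,0,1,0,1,2]) (wd [1,0,1,0,2,2])) (cstep (wd [1,0,1,0]) (wd []) r1 : c (wd [1,0,1,0,2,2]) (wd [1,0,1,0])))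
lemma cg_26_0 : c (wd [0,0,1,0,0,1,0]) (wd [1,0,0,1,0]) := (c.trans (cstep (wd []) (wd [0,0,1,0,0,1,0]) (c.symm r0) : c (wd [0,0,1,0,0,1,0]) (wd [1,1,0,0,1,0,0,1,0])) (c.trans (cstep (wd [1]) (wd [0]) (c.symm r6) : c (wd [1,1,0,0,1,0,0,1,0]) (wd [1,0,0,1,0,0,0])) (cstep (wd [1,0,0,1]) (wd []) r3 : c (wd [1,0,0,1,0,0,0]) (wd [1,0,0,1,0]))))
lemma cg_26_1 : c (wd [0,0,1,0,0,1,1]) (wd [0,0,1,0,0]) := (cstep (wd [0,0,1,0,0]) (wd []) r0 : c (wd [0,0,1,0,0,1,1]) (wd [0,0,1,0,0]))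
lemma cg_26_2 : c (wd [0,0,1,0,0,1,2]) (wd [0,0,1,0,0]) := (c.trans (cstep (wd [0,0,1,0]) (wd [2]) r4 : c (wd [0,0,1,0,0,1,2]) (wd [0,0,1,0,0,2,2])) (cstep (wd [0,0,1,0,0]) (wd []) r1 : c (wd [0,0,1,0,0,2,2]) (wd [0,0,1,0,0])))
lemma cg_27_0 : c (wd [0,0,1,0,1,0,0]) (wd [0,1,0,1,0]) := (c.trans (cstep (wd [0]) (wd [0,1,0,1,0,0]) (c.symm r0) : c (wd [0,0,1,0,1,0,0]) (wd [0,1,1,0,1,0,1,0,0])) (c.trans (cstep (wd [0,1,1]) (wd [1,0,1,0,0]) (c.symm r3) : c (wd [0,1,1,0,1,0,1,0,0]) (wd [0,1,1,0,0,0,1,0,1,0,0])) (c.trans (cstep (wd [0,1,1,0,0]) (wd []) r7 : c (wd [0,1,1,0,0,0,1,0,1,0,0]) (wd [0,1,1,0,0,1,0,1,0,1,0,0,1])) (c.trans (cstep (wd [0,1]) (wd [0,0,1]) (c.symm r8) : c (wd [0,1,1,0,0,1,0,1,0,1,0,0,1]) (wd [0,1,0,0,1,0,1,0,0,0,1]))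 (c.trans (cstep (wd [0,1,0,0,1,0,1]) (wd [1]) r3 : c (wd [0,1,0,0,1,0,1,0,0,0,1]) (wd [0,1,0,0,1,0,1,0,1])) (c.trans (cstep (wd [0]) (wd []) (c.symm r8) : c (wd [0,1,0,0,1,0,1,0,1]) (wd [0,0,0,1,0,1,0])) (cstep (wd []) (wd [1,0,1,0]) r3 : c (wd [0,0,0,1,0,1,0]) (wd [0,1,0,1,0]))))))))
lemma cg_27_1 : c (wd [0,0,1,0,1,0,1]) (wd [0,0,1,0,1,0,1]) := c.refl _
lemma cg_27_2 : c (wd [0,0,1,0,1,0,2]) (wd [0,0,1,0,1,0,1]) := (cstep (wd [0,0,1,0,1]) (wd []) (c.symm r4) : c (wd [0,0,1,0,1,0,2]) (wd [0,0,1,0,1,0,1]))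
lemma cg_28_0 : c (wd [0,1,0,0,1,0,0]) (wd [0,1,0,0,1]) := (c.trans (cstep (wd [0,1,0,0,1,0,0]) (wd []) (c.symm r0) : c (wd [0,1,0,0,1,0,0]) (wd [0,1,0,0,1,0,0,1,1])) (c.trans (cstep (wd [0]) (wd [1]) (c.symm r6) : c (wd [0,1,0,0,1,0,0,1,1]) (wd [0,0,0,1,0,0,1])) (cstep (wd []) (wd [1,0,0,1]) r3 : c (wd [0,0,0,1,0,0,1]) (wd [0,1,0,0,1]))))
lemma cg_28_1 : c (wd [0,1,0,0,1,0,1]) (wd [0,1,0,0,1,0,1]) := c.refl _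
lemma cg_28_2 : c (wd [0,1,0,0,1,0,2]) (wd [0,1,0,0,1,0,1]) := (cstep (wd [0,1,0,0,1]) (wd []) (c.symm r4) : c (wd [0,1,0,0,1,0,2]) (wd [0,1,0,0,1,0,1]))
lemma cg_29_0 : c (wd [0,1,0,1,0,1,0]) (wd [0,1,0,1,0,1,0]) := c.refl _
lemma cg_29_1 : c (wd [0,1,0,1,0,1,1]) (wd [0,1,0,1,0]) := (cstep (wd [0,1,0,1,0]) (wd []) r0 : c (wd [0,1,0,1,0,1,1]) (wd [0,1,0,1,0]))
lemma cg_29_2 : c (wd [0,1,0,1,0,1,2]) (wd [0,1,0,1,0]) := (c.trans (cstep (wd [0,1,0,1]) (wd [2]) r4 : c (wd [0,1,0,1,0,1,2]) (wd [0,1,0,1,0,2,2])) (cstep (wd [0,1,0,1,0]) (wd []) r1 : c (wd [0,1,0,1,0,2,2]) (wd [0,1,0,1,0])))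
lemma cg_30_0 : c (wd [1,0,0,1,0,1,0]) (wd [0,0,1,0,1,0,1]) := (c.trans (cstep (wd [1,0,0,1,0,1,0]) (wd []) (c.symm r0) : c (wd [1,0,0,1,0,1,0]) (wd [1,0,0,1,0,1,0,1,1])) (cstep (wd []) (wd [1]) (c.symm r8) : c (wd [1,0,0,1,0,1,0,1,1]) (wd [0,0,1,0,1,0,1])))
lemma cg_30_1 : c (wd [1,0,0,1,0,1,1]) (wd [1,0,0,1,0]) := (cstep (wd [1,0,0,1,0]) (wd []) r0 : c (wd [1,0,0,1,0,1,1]) (wd [1,0,0,1,0]))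
lemma cg_30_2 : c (wd [1,0,0,1,0,1,2]) (wd [1,0,0,1,0]) := (c.trans (cstep (wd [1,0,0,1]) (wd [2]) r4 : c (wd [1,0,0,1,0,1,2]) (wd [1,0,0,1,0,2,2])) (cstep (wd [1,0,0,1,0]) (wd []) r1 : c (wd [1,0,0,1,0,2,2]) (wd [1,0,0,1,0])))
lemma cg_31_0 : c (wd [1,0,1,0,0,1,0]) (wd [1,0,1,0,0,1,0]) := c.refl _
lemma cg_31_1 : c (wd [1,0,1,0,0,1,1]) (wd [1,0,1,0,0]) := (cstep (wd [1,0,1,0,0]) (wd []) r0 : c (wd [1,0,1,0,0,1,1]) (wd [1,0,1,0,0]))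
lemma cg_31_2 : c (wd [1,0,1,0,0,1,2]) (wd [1,0,1,0,0]) := (c.trans (cstep (wd [1,0,1,0]) (wd [2]) r4 : c (wd [1,0,1,0,0,1,2]) (wd [1,0,1,0,0,2,2])) (cstep (wd [1,0,1,0,0]) (wd []) r1 : c (wd [1,0,1,0,0,2,2]) (wd [1,0,1,0,0])))
lemma cg_32_0 : c (wd [1,0,1,0,1,0,0]) (wd [0,0,1,0,1,0,1]) := (c.trans (cstep (wd [1]) (wd [1,0,1,0,0]) (c.symm r3) : c (wd [1,0,1,0,1,0,0]) (wd [1,0,0,0,1,0,1,0,0])) (c.trans (cstep (wd [1,0,0]) (wd []) r7 : c (wd [1,0,0,0,1,0,1,0,0]) (wd [1,0,0,1,0,1,0,1,0,0,1])) (c.trans (cstep (wd []) (wd [0,0,1]) (c.symm r8) : c (wd [1,0,0,1,0,1,0,1,0,0,1]) (wd [0,0,1,0,1,0,0,0,1])) (cstep (wd [0,0,1,0,1]) (wd [1]) r3 : c (wd [0,0,1,0,1,0,0,0,1]) (wd [0,0,1,0,1,0,1])))))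
lemma cg_32_1 : c (wd [1,0,1,0,1,0,1]) (wd [1,0,1,0,1,0,1]) := c.refl _
lemma cg_32_2 : c (wd [1,0,1,0,1,0,2]) (wd [1,0,1,0,1,0,1]) := (cstep (wd [1,0,1,0,1]) (wd []) (c.symm r4) : c (wd [1,0,1,0,1,0,2]) (wd [1,0,1,0,1,0,1]))
lemma cg_33_0 : c (wd [0,0,1,0,1,0,1,0]) (wd [1,0,1,0,1,0]) := (c.trans (cstep (wd [0,0,1,0,1]) (wd [1,0]) (c.symm r3) : c (wd [0,0,1,0,1,0,1,0]) (wd [0,0,1,0,1,0,0,0,1,0])) (c.trans (cstep (wd []) (wd [0,0,1,0]) r8 : c (wd [0,0,1,0,1,0,0,0,1,0]) (wd [1,0,0,1,0,1,0,1,0,0,1,0])) (c.trans (cstep (wd [1,0,0]) (wd [0]) (c.symm r7) : c (wd [1,0,0,1,0,1,0,1,0,0,1,0]) (wd [1,0,0,0,1,0,1,0,0,0])) (c.trans (cstep (wd [1]) (wd [1,0,1,0,0,0]) r3 : c (wd [1,0,0,0,1,0,1,0,0,0]) (wd [1,0,1,0,1,0,0,0])) (cstep (wd [1,0,1,0,1])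 (wd []) r3 : c (wd [1,0,1,0,1,0,0,0]) (wd [1,0,1,0,1,0]))))))
lemma cg_33_1 : c (wd [0,0,1,0,1,0,1,1]) (wd [0,0,1,0,1,0]) := (cstep (wd [0,0,1,0,1,0]) (wd []) r0 : c (wd [0,0,1,0,1,0,1,1]) (wd [0,0,1,0,1,0]))
lemma cg_33_2 : c (wd [0,0,1,0,1,0,1,2]) (wd [0,0,1,0,1,0]) := (c.trans (cstep (wd [0,0,1,0,1]) (wd [2]) r4 : c (wd [0,0,1,0,1,0,1,2]) (wd [0,0,1,0,1,0,2,2])) (cstep (wd [0,0,1,0,1,0]) (wd []) r1 : c (wd [0,0,1,0,1,0,2,2]) (wd [0,0,1,0,1,0])))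
lemma cg_34_0 : c (wd [0,1,0,0,1,0,1,0]) (wd [0,1,0,1,0,1]) := (c.trans (cstep (wd [0,1,0,0,1,0,1,0]) (wd []) (c.symm r0) : c (wd [0,1,0,0,1,0,1,0]) (wd [0,1,0,0,1,0,1,0,1,1])) (c.trans (cstep (wd [0]) (wd [1]) (c.symm r8) : c (wd [0,1,0,0,1,0,1,0,1,1]) (wd [0,0,0,1,0,1,0,1])) (cstep (wd []) (wd [1,0,1,0,1]) r3 : c (wd [0,0,0,1,0,1,0,1]) (wd [0,1,0,1,0,1]))))
lemma cg_34_1 : c (wd [0,1,0,0,1,0,1,1]) (wd [0,1,0,0,1,0]) := (cstep (wd [0,1,0,0,1,0]) (wd []) r0 : c (wd [0,1,0,0,1,0,1,1]) (wd [0,1,0,0,1,0]))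
lemma cg_34_2 : c (wd [0,1,0,0,1,0,1,2]) (wd [0,1,0,0,1,0]) := (c.trans (cstep (wd [0,1,0,0,1]) (wd [2]) r4 : c (wd [0,1,0,0,1,0,1,2]) (wd [0,1,0,0,1,0,2,2])) (cstep (wd [0,1,0,0,1,0]) (wd []) r1 : c (wd [0,1,0,0,1,0,2,2]) (wd [0,1,0,0,1,0])))
lemma cg_35_0 : c (wd [0,1,0,1,0,1,0,0]) (wd [0,1,0,1,0,1]) := (c.trans (cstep (wd [0,1]) (wd [1,0,1,0,0]) (c.symm r3) : c (wd [0,1,0,1,0,1,0,0]) (wd [0,1,0,0,0,1,0,1,0,0])) (c.trans (cstep (wd [0,1,0,0]) (wd []) r7 : c (wd [0,1,0,0,0,1,0,1,0,0]) (wd [0,1,0,0,1,0,1,0,1,0,0,1])) (c.trans (cstep (wd [0]) (wd [0,0,1]) (c.symm r8) : c (wd [0,1,0,0,1,0,1,0,1,0,0,1]) (wd [0,0,0,1,0,1,0,0,0,1])) (c.trans (cstep (wd []) (wd [1,0,1,0,0,0,1]) r3 : c (wd [0,0,0,1,0,1,0,0,0,1]) (wd [0,1,0,1,0,0,0,1]))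 (cstep (wd [0,1,0,1]) (wd [1]) r3 : c (wd [0,1,0,1,0,0,0,1]) (wd [0,1,0,1,0,1]))))))
lemma cg_35_1 : c (wd [0,1,0,1,0,1,0,1]) (wd [0,1,0,1,0,1,0,1]) := c.refl _
lemma cg_35_2 : c (wd [0,1,0,1,0,1,0,2]) (wd [0,1,0,1,0,1,0,1]) := (cstep (wd [0,1,0,1,0,1]) (wd []) (c.symm r4) : c (wd [0,1,0,1,0,1,0,2]) (wd [0,1,0,1,0,1,0,1]))
lemma cg_36_0 : c (wd [1,0,1,0,0,1,0,0]) (wd [1,0,1,0,0,1]) := (c.trans (cstep (wd [1,0,1,0,0,1,0,0]) (wd []) (c.symm r0) : c (wd [1,0,1,0,0,1,0,0]) (wd [1,0,1,0,0,1,0,0,1,1])) (c.trans (cstep (wd [1,0]) (wd [1]) (c.symm r6) : c (wd [1,0,1,0,0,1,0,0,1,1]) (wd [1,0,0,0,1,0,0,1])) (cstep (wd [1]) (wd [1,0,0,1]) r3 : c (wd [1,0,0,0,1,0,0,1]) (wd [1,0,1,0,0,1]))))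
lemma cg_36_1 : c (wd [1,0,1,0,0,1,0,1]) (wd [1,0,1,0,0,1,0,1]) := c.refl _
lemma cg_36_2 : c (wd [1,0,1,0,0,1,0,2]) (wd [1,0,1,0,0,1,0,1]) := (cstep (wd [1,0,1,0,0,1]) (wd []) (c.symm r4) : c (wd [1,0,1,0,0,1,0,2]) (wd [1,0,1,0,0,1,0,1]))
lemma cg_37_0 : c (wd [1,0,1,0,1,0,1,0]) (wd [0,1,0,1,0,1,0,1]) := (c.trans (cstep (wd [1,0,1]) (wd [1,0,1,0]) (c.symm r3) : c (wd [1,0,1,0,1,0,1,0]) (wd [1,0,1,0,0,0,1,0,1,0])) (c.trans (cstep (wd [1,0,1,0]) (wd []) r8 : c (wd [1,0,1,0,0,0,1,0,1,0]) (wd [1,0,1,0,1,0,0,1,0,1,0,1])) (c.trans (cstep (wd []) (wd [0,1,0,1]) (c.symm r7) : c (wd [1,0,1,0,1,0,0,1,0,1,0,1]) (wd [0,1,0,1,0,0,0,1,0,1])) (cstep (wd [0,1,0,1]) (wd [1,0,1]) r3 : c (wd [0,1,0,1,0,0,0,1,0,1]) (wd [0,1,0,1,0,1,0,1])))))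
lemma cg_37_1 : c (wd [1,0,1,0,1,0,1,1]) (wd [1,0,1,0,1,0]) := (cstep (wd [1,0,1,0,1,0]) (wd []) r0 : c (wd [1,0,1,0,1,0,1,1]) (wd [1,0,1,0,1,0]))
lemma cg_37_2 : c (wd [1,0,1,0,1,0,1,2]) (wd [1,0,1,0,1,0]) := (c.trans (cstep (wd [1,0,1,0,1]) (wd [2]) r4 : c (wd [1,0,1,0,1,0,1,2]) (wd [1,0,1,0,1,0,2,2])) (cstep (wd [1,0,1,0,1,0]) (wd []) r1 : c (wd [1,0,1,0,1,0,2,2]) (wd [1,0,1,0,1,0])))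
lemma cg_38_0 : c (wd [0,1,0,1,0,1,0,1,0]) (wd [1,0,1,0,1,0,1]) := (c.trans (cstep (wd [0,1,0,1]) (wd [1,0,1,0]) (c.symm r3) : c (wd [0,1,0,1,0,1,0,1,0]) (wd [0,1,0,1,0,0,0,1,0,1,0])) (c.trans (cstep (wd []) (wd [0,1,0,1,0]) r7 : c (wd [0,1,0,1,0,0,0,1,0,1,0]) (wd [1,0,1,0,1,0,0,1,0,1,0,1,0])) (c.trans (cstep (wd [1,0,1,0]) (wd [0]) (c.symm r8) : c (wd [1,0,1,0,1,0,0,1,0,1,0,1,0]) (wd [1,0,1,0,0,0,1,0,1,0,0])) (c.trans (cstep (wd [1,0,1,0,0]) (wd []) r7 : c (wd [1,0,1,0,0,0,1,0,1,0,0]) (wd [1,0,1,0,0,1,0,1,0,1,0,0,1])) (c.trans (cstep (wd [1,0]) (wd [0,0,1]) (c.symm r8) : c (wd [1,0,1,0,0,1,0,1,0,1,0,0,1]) (wd [1,0,0,0,1,0,1,0,0,0,1])) (c.trans (cstep (wd [1]) (wd [1,0,1,0,0,0,1]) r3 : c (wd [1,0,0,0,1,0,1,0,0,0,1]) (wd [1,0,1,0,1,0,0,0,1]))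 (cstep (wd [1,0,1,0,1]) (wd [1]) r3 : c (wd [1,0,1,0,1,0,0,0,1]) (wd [1,0,1,0,1,0,1]))))))))
lemma cg_38_1 : c (wd [0,1,0,1,0,1,0,1,1]) (wd [0,1,0,1,0,1,0]) := (cstep (wd [0,1,0,1,0,1,0]) (wd []) r0 : c (wd [0,1,0,1,0,1,0,1,1]) (wd [0,1,0,1,0,1,0]))
lemma cg_38_2 : c (wd [0,1,0,1,0,1,0,1,2]) (wd [0,1,0,1,0,1,0]) := (c.trans (cstep (wd [0,1,0,1,0,1]) (wd [2]) r4 : c (wd [0,1,0,1,0,1,0,1,2]) (wd [0,1,0,1,0,1,0,2,2])) (cstep (wd [0,1,0,1,0,1,0]) (wd []) r1 : c (wd [0,1,0,1,0,1,0,2,2]) (wd [0,1,0,1,0,1,0])))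
lemma cg_39_0 : c (wd [1,0,1,0,0,1,0,1,0]) (wd [1,0,1,0,1,0,1]) := (c.trans (cstep (wd [1,0,1,0,0,1,0,1,0]) (wd []) (c.symm r0) : c (wd [1,0,1,0,0,1,0,1,0]) (wd [1,0,1,0,0,1,0,1,0,1,1])) (c.trans (cstep (wd [1,0]) (wd [1]) (c.symm r8) : c (wd [1,0,1,0,0,1,0,1,0,1,1]) (wd [1,0,0,0,1,0,1,0,1])) (cstep (wd [1]) (wd [1,0,1,0,1]) r3 : c (wd [1,0,0,0,1,0,1,0,1]) (wd [1,0,1,0,1,0,1]))))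
lemma cg_39_1 : c (wd [1,0,1,0,0,1,0,1,1]) (wd [1,0,1,0,0,1,0]) := (cstep (wd [1,0,1,0,0,1,0]) (wd []) r0 : c (wd [1,0,1,0,0,1,0,1,1]) (wd [1,0,1,0,0,1,0]))
lemma cg_39_2 : c (wd [1,0,1,0,0,1,0,1,2]) (wd [1,0,1,0,0,1,0]) := (c.trans (cstep (wd [1,0,1,0,0,1]) (wd [2]) r4 : c (wd [1,0,1,0,0,1,0,1,2]) (wd [1,0,1,0,0,1,0,2,2])) (cstep (wd [1,0,1,0,0,1,0]) (wd []) r1 : c (wd [1,0,1,0,0,1,0,2,2]) (wd [1,0,1,0,0,1,0])))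

def repL : Fin 40 → List (Fin 3) := ![[], [0], [1], [2], [0,0], [0,1], [1,0], [1,2], [2,1], [0,0,1], [0,1,0], [1,0,0], [1,0,1], [1,2,1], [0,0,1,0], [0,1,0,0], [0,1,0,1], [1,0,0,1], [1,0,1,0], [0,0,1,0,0], [0,0,1,0,1], [0,1,0,0,1], [0,1,0,1,0], [1,0,0,1,0], [1,0,1,0,0], [1,0,1,0,1], [0,0,1,0,0,1], [0,0,1,0,1,0], [0,1,0,0,1,0], [0,1,0,1,0,1], [1,0,0,1,0,1], [1,0,1,0,0,1], [1,0,1,0,1,0], [0,0,1,0,1,0,1], [0,1,0,0,1,0,1], [0,1,0,1,0,1,0], [1,0,1,0,0,1,0], [1,0,1,0,1,0,1], [0,1,0,1,0,1,0,1], [1,0,1,0,0,1,0,1]]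
def rep (i : Fin 40) : FreeMonoid (Fin 3) := wd (repL i)
def nxt : Fin 40 → Fin 3 → Fin 40 := ![![1,2,3], ![4,5,5], ![6,0,7], ![6,8,0], ![1,9,9], ![10,1,1], ![11,12,12], ![1,13,2], ![1,3,13], ![14,4,4], ![15,16,16], ![6,17,17], ![18,6,6], ![6,7,8], ![19,20,20], ![10,21,21], ![22,10,10], ![23,11,11], ![24,25,25], ![14,26,26], ![27,14,14], ![28,15,15], ![27,29,29], ![26,30,30], ![18,31,31], ![32,18,18], ![23,19,19], ![22,33,33], ![21,34,34], ![35,22,22], ![33,23,23], ![36,24,24], ![33,37,37], ![32,27,27], ![29,28,28], ![29,38,38], ![31,39,39], ![38,32,32], ![37,35,35], ![37,36,36]]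

lemma edges_c : ∀ i : Fin 40, ∀ g : Fin 3, c (rep i * FreeMonoid.of g) (rep (nxt i g)) := by
  intro i g
  fin_cases i <;> fin_cases g
  · exact cg_0_0
  · exact cg_0_1
  · exact cg_0_2
  · exact cg_1_0
  · exact cg_1_1
  · exact cg_1_2
  · exact cg_2_0
  · exact cg_2_1
  · exact cg_2_2
  · exact cg_3_0
  · exact cg_3_1
  · exact cg_3_2
  · exact cg_4_0
  · exact cg_4_1
  · exact cg_4_2
  · exact cg_5_0
  · exact cg_5_1
  · exact cg_5_2
  · exact cg_6_0
  · exact cg_6_1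
  · exact cg_6_2
  · exact cg_7_0
  · exact cg_7_1
  · exact cg_7_2
  · exact cg_8_0
  · exact cg_8_1
  · exact cg_8_2
  · exact cg_9_0
  · exact cg_9_1
  · exact cg_9_2
  · exact cg_10_0
  · exact cg_10_1
  · exact cg_10_2
  · exact cg_11_0
  · exact cg_11_1
  · exact cg_11_2
  · exact cg_12_0
  · exact cg_12_1
  · exact cg_12_2
  · exact cg_13_0
  · exact cg_13_1
  · exact cg_13_2
  · exact cg_14_0
  · exact cg_14_1
  · exact cg_14_2
  · exact cg_15_0
  · exact cg_15_1
  · exact cg_15_2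
  · exact cg_16_0
  · exact cg_16_1
  · exact cg_16_2
  · exact cg_17_0
  · exact cg_17_1
  · exact cg_17_2
  · exact cg_18_0
  · exact cg_18_1
  · exact cg_18_2
  · exact cg_19_0
  · exact cg_19_1
  · exact cg_19_2
  · exact cg_20_0
  · exact cg_20_1
  · exact cg_20_2
  · exact cg_21_0
  · exact cg_21_1
  · exact cg_21_2
  · exact cg_22_0
  · exact cg_22_1
  · exact cg_22_2
  · exact cg_23_0
  · exact cg_23_1
  · exact cg_23_2
  · exact cg_24_0
  · exact cg_24_1
  · exact cg_24_2
  · exact cg_25_0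
  · exact cg_25_1
  · exact cg_25_2
  · exact cg_26_0
  · exact cg_26_1
  · exact cg_26_2
  · exact cg_27_0
  · exact cg_27_1
  · exact cg_27_2
  · exact cg_28_0
  · exact cg_28_1
  · exact cg_28_2
  · exact cg_29_0
  · exact cg_29_1
  · exact cg_29_2
  · exact cg_30_0
  · exact cg_30_1
  · exact cg_30_2
  · exact cg_31_0
  · exact cg_31_1
  · exact cg_31_2
  · exact cg_32_0
  · exact cg_32_1
  · exact cg_32_2
  · exact cg_33_0
  · exact cg_33_1
  · exact cg_33_2
  · exact cg_34_0
  · exact cg_34_1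
  · exact cg_34_2
  · exact cg_35_0
  · exact cg_35_1
  · exact cg_35_2
  · exact cg_36_0
  · exact cg_36_1
  · exact cg_36_2
  · exact cg_37_0
  · exact cg_37_1
  · exact cg_37_2
  · exact cg_38_0
  · exact cg_38_1
  · exact cg_38_2
  · exact cg_39_0
  · exact cg_39_1
  · exact cg_39_2

def mats : Fin 40 → BRel := ![mx0, mx1, mx2, mx3, mx8, mx7, mx5, mx6, mx4, mx13, mx12, mx11, mx10, mx9, mx18, mx17, mx16, mx15, mx14, mx25, mx24, mx23, mx22, mx21, mx20, mx19, mx29, mx31, mx32, mx30, mx28, mx27, mx26, mx34, mx37, mx36, mx35, mx33, mx39, mx38]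
def fpPairs : List (Triad × Triad) := [((Triad.aug 0), (Triad.aug 0)), ((Triad.maj 0), (Triad.maj 0)), ((Triad.maj 0), (Triad.aug 0)), ((Triad.maj 0), (Triad.min 0)), ((Triad.aug 0), (Triad.maj 0)), ((Triad.aug 0), (Triad.aug 2)), ((Triad.maj 0), (Triad.maj 1)), ((Triad.maj 0), (Triad.min 1)), ((Triad.maj 0), (Triad.aug 1)), ((Triad.maj 0), (Triad.aug 2)), ((Triad.maj 0), (Triad.maj 3)), ((Triad.maj 0), (Triad.maj 4)), ((Triad.aug 0), (Triad.maj 2)), ((Triad.aug 0), (Triad.maj 3)), ((Triad.maj 0), (Triad.maj 2)), ((Triad.maj 0), (Triad.maj 8)), ((Triad.maj 0), (Triad.min 4))]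
def fp (f : BRel) : List Bool := fpPairs.map fun q => f q.1 q.2
lemma mats_inj : ∀ i j : Fin 40, fp (mats i) = fp (mats j) → i = j := by decide

lemma repval : ∀ i : Fin 40, ff (rep i) = toRel (mats i) := by
  intro i
  fin_cases i
  · exact F_nil
  · exact F_u
  · exact F_p
  · exact F_l
  · exact F_uu
  · exact F_up
  · exact F_pu
  · exact F_pl
  · exact F_lp
  · exact F_uup
  · exact F_upu
  · exact F_puu
  · exact F_pup
  · exact F_plp
  · exact F_uupu
  · exact F_upuu
  · exact F_upup
  · exact F_puup
  · exact F_pupu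
  · exact F_uupuu
  · exact F_uupup
  · exact F_upuup
  · exact F_upupu
  · exact F_puupu
  · exact F_pupuu
  · exact F_pupup
  · exact F_uupuup
  · exact F_uupupu
  · exact F_upuupu
  · exact F_upupup
  · exact F_puupup
  · exact F_pupuup
  · exact F_pupupu
  · exact F_uupupup
  · exact F_upuupup
  · exact F_upupupu
  · exact F_pupuupu
  · exact F_pupupup
  · exact F_upupupup
  · exact F_pupuupup

lemma sound : ∀ a b, rels a b → f0 a = f0 b := by
  rintro a b (⟨rfl,rfl⟩|⟨rfl,rfl⟩|⟨rfl,rfl⟩|⟨rfl,rfl⟩|⟨rfl,rfl⟩|⟨rfl,rfl⟩|⟨rfl,rfl⟩|⟨rfl,rfl⟩|⟨rfl,rfl⟩) <;>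
      apply Subtype.ext <;> rw [val_f0, val_f0]
  · show ff (wd [1,1]) = ff (wd [])
    rw [F_pp, F_nil]
  · show ff (wd [2,2]) = ff (wd [])
    rw [F_ll, F_nil]
  · show ff (wd [2,1,2]) = ff (wd [1,2,1])
    rw [F_lpl, F_plp]
  · show ff (wd [0,0,0]) = ff (wd [0])
    rw [F_uuu, F_u]
  · show ff (wd [0,1]) = ff (wd [0,2])
    rw [F_up, F_ul]
  · show ff (wd [1,0]) = ff (wd [2,0])
    rw [F_pu, F_lu]
  · show ff (wd [0,0,1,0,0]) = ff (wd [1,0,0,1,0,0,1])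
    rw [F_uupuu, F_puupuup]
  · show ff (wd [0,1,0,1,0,0]) = ff (wd [1,0,1,0,1,0,0,1])
    rw [F_upupuu, F_pupupuup]
  · show ff (wd [0,0,1,0,1,0]) = ff (wd [1,0,0,1,0,1,0,1])
    rw [F_uupupu, F_puupupup]

lemma sound' : conGen rels ≤ Con.ker f0 :=
  Con.conGen_le.mpr (fun a b h => (Con.ker_rel _).mpr (sound a b h))

def fM : PresUPL →* M := (conGen rels).lift f0 sound'

lemma fM_mk' (x : FreeMonoid (Fin 3)) : fM ((conGen rels).mk' x) = f0 x :=
  Con.lift_mk' sound' x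

lemma reach : ∀ lw : List (Fin 3), ∃ i : Fin 40, c (wd lw) (rep i) := by
  intro lw
  induction lw using List.reverseRecOn with
  | nil => exact ⟨0, c.refl _⟩
  | append_singleton lw g ih =>
    obtain ⟨i, hi⟩ := ih
    exact ⟨nxt i g, c.trans (c.mul hi (c.refl (FreeMonoid.of g))) (edges_c i g)⟩

lemma fM_inj : Function.Injective fM := by
  intro x y h
  obtain ⟨w1, rfl⟩ := Con.mk'_surjective (c := conGen rels) x
  obtain ⟨w2, rfl⟩ := Con.mk'_surjective (c := conGen rels) y
  obtain ⟨i, hi⟩ := reach (FreeMonoid.toList w1)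
  obtain ⟨j, hj⟩ := reach (FreeMonoid.toList w2)
  have hw1 : (conGen rels).mk' w1 = (conGen rels).mk' (rep i) := (Con.eq _).mpr hi
  have hw2 : (conGen rels).mk' w2 = (conGen rels).mk' (rep j) := (Con.eq _).mpr hj
  have h2 : fM ((conGen rels).mk' (rep i)) = fM ((conGen rels).mk' (rep j)) := by
    rw [← hw1, ← hw2]; exact h
  rw [fM_mk', fM_mk'] at h2
  have h3 : ff (rep i) = ff (rep j) := by
    rw [← val_f0, ← val_f0, h2]
  rw [repval, repval] at h3
  have h4 : i = j := mats_inj i j (by rw [toRel_inj h3])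
  rw [hw1, hw2, h4]

lemma fM_mk'_u : ((fM ((conGen rels).mk' u) : M) : RelM) = U := by
  rw [fM_mk', val_f0]
  exact (F_u).trans U_eq.symm

lemma fM_mk'_p : ((fM ((conGen rels).mk' p) : M) : RelM) = P := by
  rw [fM_mk', val_f0]
  exact (F_p).trans P_eq.symm

lemma fM_mk'_l : ((fM ((conGen rels).mk' l) : M) : RelM) = L := by
  rw [fM_mk', val_f0]
  exact (F_l).trans L_eq.symm

lemma fM_surj : Function.Surjective fM := by
  have key : ∀ r ∈ Submonoid.closure ({U, P, L} : Set RelM),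
      ∃ x : PresUPL, ((fM x : M) : RelM) = r := by
    intro r hr
    induction hr using Submonoid.closure_induction with
    | mem s hs =>
      rcases hs with rfl | rfl | rfl
      · exact ⟨_, fM_mk'_u⟩
      · exact ⟨_, fM_mk'_p⟩
      · exact ⟨_, fM_mk'_l⟩
    | one => exact ⟨1, by rw [map_one]; rfl⟩
    | mul a b _ _ iha ihb =>
      obtain ⟨x, hx⟩ := iha
      obtain ⟨y, hy⟩ := ihb
      exact ⟨x * y, by rw [map_mul]; rw [← hx, ← hy]; rfl⟩
  intro m
  obtain ⟨x, hx⟩ := key m.1 m.2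
  exact ⟨x, Subtype.ext hx⟩

/-- `M_{U,P,L}` is isomorphic to the presented monoid, via `u ↦ U`, `p ↦ P`, `l ↦ L`. -/
theorem presentation_of_M :
    ∃ e : PresUPL ≃* M,
      (↑(e ((conGen rels).mk' u)) : RelM) = U ∧
      (↑(e ((conGen rels).mk' p)) : RelM) = P ∧
      (↑(e ((conGen rels).mk' l)) : RelM) = L := by
  exact ⟨MulEquiv.ofBijective fM ⟨fM_inj, fM_surj⟩, fM_mk'_u, fM_mk'_p, fM_mk'_l⟩

end CubeDance
end

section
/- Every monoid automorphism N of M_{U,P,L} maps the submonoid generated by {P, L} bijectively onto itself; that is, N restricts to an automorphism of the subgroup generated by P and L. -/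
namespace CubeDance

/-- The subgroup of `M_{U,P,L}` generated by `P` and `L`, as a submonoid of `M`. -/
def PLsub : Submonoid M :=
  Submonoid.closure {(⟨P, P_mem⟩ : M), (⟨L, L_mem⟩ : M)}

/-! ### Auxiliary machinery -/

lemma mul_apply (R S : RelM) (p q : Triad) : (R * S) p q ↔ ∃ r, R p r ∧ S r q := Iff.rfl

lemma one_apply (p q : Triad) : (1 : RelM) p q ↔ p = q := Iff.rfl

/-- `R` relates two distinct points (same type, roots differing by 4) to a common point. -/
def Coll (R : RelM) : Prop :=
  ∃ x q, (R (.maj x) q ∧ R (.maj (x + 4)) q) ∨ (R (.min x) q ∧ R (.min (x + 4)) q)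

/-- `R` relates a common point to two distinct points. -/
def CoColl (R : RelM) : Prop :=
  ∃ x p, (R p (.maj x) ∧ R p (.maj (x + 4))) ∨ (R p (.min x) ∧ R p (.min (x + 4)))

def Bad (R : RelM) : Prop := Coll R ∧ CoColl R

def Tot (R : RelM) : Prop := ∀ p, ∃ q, R p q

def CoTot (R : RelM) : Prop := ∀ q, ∃ p, R p q

lemma U_tot_aug : ∀ a : ZMod 4, ((((a.val : ZMod 12)).val : ZMod 4) = a) := by decide

lemma U_tot : Tot U := by
  intro p
  cases p with
  | maj x => exact ⟨.aug (x.val : ZMod 4), rfl⟩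
  | min x =>
      refine ⟨.aug ((x.val : ZMod 4) - 1), ?_⟩
      show (x.val : ZMod 4) = (x.val : ZMod 4) - 1 + 1
      ring
  | aug a => exact ⟨.maj ((a.val : ZMod 12)), U_tot_aug a⟩

lemma U_cotot : CoTot U := by
  intro q
  cases q with
  | maj x => exact ⟨.aug (x.val : ZMod 4), rfl⟩
  | min x =>
      refine ⟨.aug ((x.val : ZMod 4) - 1), ?_⟩
      show (x.val : ZMod 4) = (x.val : ZMod 4) - 1 + 1
      ring
  | aug a => exact ⟨.maj ((a.val : ZMod 12)), U_tot_aug a⟩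

lemma P_tot : Tot P := by
  intro p
  cases p with
  | maj x => exact ⟨.min x, rfl⟩
  | min x => exact ⟨.maj x, rfl⟩
  | aug a => exact ⟨.aug a, rfl⟩

lemma P_cotot : CoTot P := by
  intro q
  cases q with
  | maj x => exact ⟨.min x, rfl⟩
  | min x => exact ⟨.maj x, rfl⟩
  | aug a => exact ⟨.aug a, rfl⟩

lemma L_tot : Tot L := by
  intro p
  cases p with
  | maj x => exact ⟨.min (x + 4), rfl⟩
  | min x =>
      refine ⟨.maj (x - 4), ?_⟩
      show x = x - 4 + 4
      ring
  | aug a => exact ⟨.aug a, rfl⟩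

lemma L_cotot : CoTot L := by
  intro q
  cases q with
  | maj x => exact ⟨.min (x + 4), rfl⟩
  | min x =>
      refine ⟨.maj (x - 4), ?_⟩
      show x = x - 4 + 4
      ring
  | aug a => exact ⟨.aug a, rfl⟩

lemma tot_of_mem : ∀ R ∈ M, Tot R := by
  intro R hR
  refine Submonoid.closure_induction (motive := fun R _ => Tot R) ?_ ?_ ?_ hR
  · rintro x hx
    rcases hx with rfl | rfl | rfl
    exacts [U_tot, P_tot, L_tot]
  · intro p; exact ⟨p, rfl⟩
  · rintro R S _ _ hR hS p
    obtain ⟨q, hq⟩ := hR p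
    obtain ⟨r, hr⟩ := hS q
    exact ⟨r, q, hq, hr⟩

lemma cotot_of_mem : ∀ R ∈ M, CoTot R := by
  intro R hR
  refine Submonoid.closure_induction (motive := fun R _ => CoTot R) ?_ ?_ ?_ hR
  · rintro x hx
    rcases hx with rfl | rfl | rfl
    exacts [U_cotot, P_cotot, L_cotot]
  · intro p; exact ⟨p, rfl⟩
  · rintro R S _ _ hR hS r
    obtain ⟨q, hq⟩ := hS r
    obtain ⟨p, hp⟩ := hR q
    exact ⟨p, q, hp, hq⟩

lemma bad_U : Bad U := by
  have h0 : (((0 : ZMod 12)).val : ZMod 4) = 0 := by decide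
  have h4 : (((0 + 4 : ZMod 12)).val : ZMod 4) = 0 := by decide
  exact ⟨⟨0, .aug 0, Or.inl ⟨h0, h4⟩⟩, ⟨0, .aug 0, Or.inl ⟨h0, h4⟩⟩⟩

lemma coll_mul_of_coll (R S : RelM) (hR : Coll R) (hS : Tot S) : Coll (R * S) := by
  obtain ⟨x, q, h⟩ := hR
  obtain ⟨r, hr⟩ := hS q
  rcases h with ⟨h1, h2⟩ | ⟨h1, h2⟩
  · exact ⟨x, r, Or.inl ⟨⟨q, h1, hr⟩, ⟨q, h2, hr⟩⟩⟩
  · exact ⟨x, r, Or.inr ⟨⟨q, h1, hr⟩, ⟨q, h2, hr⟩⟩⟩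

lemma cocoll_mul_of_cocoll (R S : RelM) (hR : CoTot R) (hS : CoColl S) : CoColl (R * S) := by
  obtain ⟨x, q, h⟩ := hS
  obtain ⟨p, hp⟩ := hR q
  rcases h with ⟨h1, h2⟩ | ⟨h1, h2⟩
  · exact ⟨x, p, Or.inl ⟨⟨q, hp, h1⟩, ⟨q, hp, h2⟩⟩⟩
  · exact ⟨x, p, Or.inr ⟨⟨q, hp, h1⟩, ⟨q, hp, h2⟩⟩⟩

/-- Left multiplication preserving `Coll`. -/
def LC (S : RelM) : Prop := ∀ R, Coll R → Coll (S * R)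

/-- Right multiplication preserving `CoColl`. -/
def RC (S : RelM) : Prop := ∀ R, CoColl R → CoColl (R * S)

lemma LC_P : LC P := by
  rintro R ⟨x, q, h⟩
  rcases h with ⟨h1, h2⟩ | ⟨h1, h2⟩
  · exact ⟨x, q, Or.inr ⟨⟨.maj x, rfl, h1⟩, ⟨.maj (x + 4), rfl, h2⟩⟩⟩
  · exact ⟨x, q, Or.inl ⟨⟨.min x, rfl, h1⟩, ⟨.min (x + 4), rfl, h2⟩⟩⟩

lemma LC_L : LC L := by
  rintro R ⟨x, q, h⟩
  rcases h with ⟨h1, h2⟩ | ⟨h1, h2⟩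
  · refine ⟨x + 4, q, Or.inr ⟨⟨.maj x, rfl, h1⟩, ⟨.maj (x + 4), ?_, h2⟩⟩⟩
    show x + 4 + 4 = x + 4 + 4
    rfl
  · refine ⟨x - 4, q, Or.inl ⟨⟨.min x, ?_, h1⟩, ⟨.min (x + 4), ?_, h2⟩⟩⟩
    · show x = x - 4 + 4; ring
    · show x + 4 = x - 4 + 4 + 4; ring

lemma RC_P : RC P := by
  rintro R ⟨x, p, h⟩
  rcases h with ⟨h1, h2⟩ | ⟨h1, h2⟩
  · exact ⟨x, p, Or.inr ⟨⟨.maj x, h1, rfl⟩, ⟨.maj (x + 4), h2, rfl⟩⟩⟩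
  · exact ⟨x, p, Or.inl ⟨⟨.min x, h1, rfl⟩, ⟨.min (x + 4), h2, rfl⟩⟩⟩

lemma RC_L : RC L := by
  rintro R ⟨x, p, h⟩
  rcases h with ⟨h1, h2⟩ | ⟨h1, h2⟩
  · refine ⟨x + 4, p, Or.inr ⟨⟨.maj x, h1, rfl⟩, ⟨.maj (x + 4), h2, ?_⟩⟩⟩
    show x + 4 + 4 = x + 4 + 4
    rfl
  · refine ⟨x - 4, p, Or.inl ⟨⟨.min x, h1, ?_⟩, ⟨.min (x + 4), h2, ?_⟩⟩⟩
    · show x = x - 4 + 4; ring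
    · show x + 4 = x - 4 + 4 + 4; ring

lemma lc_rc_of_mem_PL : ∀ S ∈ Submonoid.closure ({P, L} : Set RelM), LC S ∧ RC S := by
  intro S hS
  refine Submonoid.closure_induction (motive := fun S _ => LC S ∧ RC S) ?_ ?_ ?_ hS
  · rintro x hx
    rcases hx with rfl | rfl
    exacts [⟨LC_P, RC_P⟩, ⟨LC_L, RC_L⟩]
  · refine ⟨fun R hR => ?_, fun R hR => ?_⟩
    · rwa [one_mul]
    · rwa [mul_one]
  · rintro S T _ _ ⟨hS1, hS2⟩ ⟨hT1, hT2⟩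
    refine ⟨fun R hR => ?_, fun R hR => ?_⟩
    · rw [mul_assoc]; exact hS1 _ (hT1 _ hR)
    · rw [← mul_assoc]; exact hT2 _ (hS2 _ hR)

lemma mem_PL_or_bad : ∀ R ∈ M, R ∈ Submonoid.closure ({P, L} : Set RelM) ∨ Bad R := by
  intro R hR
  refine Submonoid.closure_induction
    (motive := fun R _ => R ∈ Submonoid.closure ({P, L} : Set RelM) ∨ Bad R) ?_ ?_ ?_ hR
  · rintro x hx
    rcases hx with rfl | rfl | rfl
    · exact Or.inr bad_U
    · exact Or.inl (Submonoid.subset_closure (Set.mem_insert _ _))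
    · exact Or.inl (Submonoid.subset_closure (Set.mem_insert_of_mem _ rfl))
  · exact Or.inl (one_mem _)
  · rintro R S hR hS (hR' | ⟨hRc, hRcc⟩) (hS' | ⟨hSc, hScc⟩)
    · exact Or.inl (mul_mem hR' hS')
    · refine Or.inr ⟨(lc_rc_of_mem_PL R hR').1 _ hSc,
        cocoll_mul_of_cocoll R S (cotot_of_mem R hR) hScc⟩
    · exact Or.inr ⟨coll_mul_of_coll R S hRc (tot_of_mem S hS),
        (lc_rc_of_mem_PL S hS').2 _ hRcc⟩
    · exact Or.inr ⟨coll_mul_of_coll R S hRc (tot_of_mem S hS),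
        cocoll_mul_of_cocoll R S (cotot_of_mem R hR) hScc⟩

lemma four_ne_zero : (4 : ZMod 12) ≠ 0 := by decide

/-- A relation with a two-sided inverse cannot collapse two distinct points. -/
lemma not_coll_of_unit (R S : RelM) (h1 : R * S = 1) (h2 : S * R = 1) : ¬ Coll R := by
  rintro ⟨x, q, h⟩
  have key : ∀ p p' : Triad, R p q → R p' q → p = p' := by
    intro p p' hp hp'
    have hq : (S * R) q q := by rw [h2]; rfl
    obtain ⟨r, hSr, _⟩ := hq
    have e1 : (R * S) p r = (1 : RelM) p r := by rw [h1]
    have e2 : (R * S) p' r = (1 : RelM) p' r := by rw [h1]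
    have hp1 : p = r := by
      rw [← one_apply]; rw [← e1]; exact ⟨q, hp, hSr⟩
    have hp2 : p' = r := by
      rw [← one_apply]; rw [← e2]; exact ⟨q, hp', hSr⟩
    rw [hp1, hp2]
  rcases h with ⟨ha, hb⟩ | ⟨ha, hb⟩
  · have := key _ _ ha hb
    have : x = x + 4 := by injection this
    exact four_ne_zero (by linear_combination this.symm)
  · have := key _ _ ha hb
    have : x = x + 4 := by injection this
    exact four_ne_zero (by linear_combination this.symm)

lemma P_mul_P : P * P = 1 := by
  funext p q
  apply propext
  constructor
  · rintro ⟨r, h1, h2⟩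
    show p = q
    cases p <;> cases r <;> cases q <;> simp_all [P]
  · rintro rfl
    show (P * P) p p
    cases p with
    | maj x => exact ⟨.min x, rfl, rfl⟩
    | min x => exact ⟨.maj x, rfl, rfl⟩
    | aug a => exact ⟨.aug a, rfl, rfl⟩

lemma L_mul_L : L * L = 1 := by
  funext p q
  apply propext
  constructor
  · rintro ⟨r, h1, h2⟩
    show p = q
    cases p <;> cases r <;> cases q <;> simp_all [L]
  · rintro rfl
    show (L * L) p p
    cases p with
    | maj x => exact ⟨.min (x + 4), rfl, rfl⟩
    | min x => exact ⟨.maj (x - 4), by show x = x - 4 + 4; ring, by show x = x - 4 + 4; ring⟩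
    | aug a => exact ⟨.aug a, rfl, rfl⟩

lemma Pm_unit : IsUnit (⟨P, P_mem⟩ : M) :=
  ⟨⟨⟨P, P_mem⟩, ⟨P, P_mem⟩, Subtype.ext P_mul_P, Subtype.ext P_mul_P⟩, rfl⟩

lemma Lm_unit : IsUnit (⟨L, L_mem⟩ : M) :=
  ⟨⟨⟨L, L_mem⟩, ⟨L, L_mem⟩, Subtype.ext L_mul_L, Subtype.ext L_mul_L⟩, rfl⟩

lemma isUnit_of_mem_PLsub : ∀ x : M, x ∈ PLsub → IsUnit x := by
  intro x hx
  refine Submonoid.closure_induction (motive := fun x _ => IsUnit x) ?_ isUnit_one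
    (fun a b _ _ ha hb => ha.mul hb) hx
  rintro y hy
  rcases hy with rfl | rfl
  exacts [Pm_unit, Lm_unit]

lemma map_PLsub : PLsub.map M.subtype = Submonoid.closure ({P, L} : Set RelM) := by
  rw [PLsub, MonoidHom.map_mclosure]
  congr 1
  simp [Set.image_insert_eq]

lemma mem_PLsub_iff (x : M) : x ∈ PLsub ↔ (x : RelM) ∈ Submonoid.closure ({P, L} : Set RelM) := by
  rw [← map_PLsub]
  constructor
  · intro hx
    exact ⟨x, hx, rfl⟩
  · rintro ⟨y, hy, h⟩
    have : y = x := Subtype.ext h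
    rwa [← this]

lemma mem_PLsub_of_isUnit : ∀ x : M, IsUnit x → x ∈ PLsub := by
  rintro x ⟨u, rfl⟩
  rw [mem_PLsub_iff]
  have h1 : ((u : M) : RelM) * ((u⁻¹ : Mˣ) : M) = 1 := by
    have := u.mul_inv
    exact congrArg Subtype.val this
  have h2 : (((u⁻¹ : Mˣ) : M) : RelM) * ((u : M) : RelM) = 1 := by
    have := u.inv_mul
    exact congrArg Subtype.val this
  rcases mem_PL_or_bad _ (u : M).2 with h | ⟨hc, _⟩
  · exact h
  · exact absurd hc (not_coll_of_unit _ _ h1 h2)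

/-- Every monoid automorphism of `M_{U,P,L}` maps the submonoid generated by `{P, L}`
bijectively onto itself. -/
theorem aut_preserves_PL (N : MulAut M) :
    PLsub.map N.toMonoidHom = PLsub := by
  ext x
  simp only [Submonoid.mem_map]
  constructor
  · rintro ⟨y, hy, rfl⟩
    exact mem_PLsub_of_isUnit _ ((isUnit_of_mem_PLsub y hy).map N.toMonoidHom)
  · intro hx
    refine ⟨N.symm x, ?_, N.apply_symm_apply x⟩
    exact mem_PLsub_of_isUnit _ ((isUnit_of_mem_PLsub x hx).map N.symm.toMonoidHom)

end CubeDance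
end

section
/- The subgroup of Aut(S) consisting of pairs (N, ν) with N the identity automorphism of M and ν fixing each of the four augmented triads is isomorphic to (Z/3)⁴; in particular it has order 81. -/
namespace CubeDance

/-! ### Auxiliary development (part 1: no dependence on `compat`) -/

set_option maxRecDepth 40000

deriving instance Fintype for Triad

/-- Inclusion `ZMod 3 → ZMod 12`. -/
def lift3 (k : ZMod 3) : ZMod 12 := (k.val : ZMod 12)

/-- The residue class mod 4 of an element of `ZMod 12`, as `Fin 4`. -/
def idx4 (x : ZMod 12) : Fin 4 := ⟨x.val % 4, Nat.mod_lt _ (by norm_num)⟩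

/-- The action on roots: translate `x` by `4 * s (x mod 4)`. -/
def g (s : Fin 4 → ZMod 3) (x : ZMod 12) : ZMod 12 := x + 4 * lift3 (s (idx4 x))

lemma g_neg_g : ∀ (s : Fin 4 → ZMod 3) (x : ZMod 12), g (-s) (g s x) = x := by decide

lemma idx4_g : ∀ (s : Fin 4 → ZMod 3) (x : ZMod 12), idx4 (g s x) = idx4 x := by decide

lemma val4_g : ∀ (s : Fin 4 → ZMod 3) (x : ZMod 12),
    (((g s x).val : ZMod 4)) = (x.val : ZMod 4) := by decide

lemma g_add4 : ∀ (s : Fin 4 → ZMod 3) (x : ZMod 12), g s (x + 4) = g s x + 4 := by decide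

lemma lift3_add : ∀ u v : ZMod 3,
    (4:ZMod 12) * lift3 (u+v) = 4 * lift3 u + 4 * lift3 v := by decide

lemma g_zero : ∀ x : ZMod 12, g 0 x = x := by decide

/-- Extract the `ZMod 3` part of a multiple of 4. -/
def dd (z : ZMod 12) : ZMod 3 := ((z.val / 4 : ℕ) : ZMod 3)

lemma rep_s17 : ∀ z : ZMod 12,
    z = ((z.val % 4 : ℕ) : ZMod 12) + 4 * ((z.val / 4 : ℕ) : ZMod 12) := by decide

lemma Dlem : ∀ z w : ZMod 12, (z.val : ZMod 4) = (w.val : ZMod 4) →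
    w + 4 * lift3 (dd (z - w)) = z := by decide

lemma g_inj : ∀ a b : Fin 4 → ZMod 3, (∀ x : ZMod 12, g a x = g b x) → a = b := by decide

lemma g_comp (a b : Fin 4 → ZMod 3) (x : ZMod 12) : g (a + b) x = g a (g b x) := by
  conv_rhs => rw [g, idx4_g]
  show x + 4 * lift3 ((a + b) (idx4 x)) = g b x + 4 * lift3 (a (idx4 x))
  rw [Pi.add_apply, lift3_add, g]
  ring

/-- The underlying map of the permutation attached to `s : Fin 4 → ZMod 3`. -/
def F (s : Fin 4 → ZMod 3) : Triad → Triad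
  | .maj x => .maj (g s x)
  | .min x => .min (g s x)
  | .aug a => .aug a

/-- The permutation of `Triad` attached to `s : Fin 4 → ZMod 3`. -/
def permF (s : Fin 4 → ZMod 3) : Equiv.Perm Triad where
  toFun := F s
  invFun := F (-s)
  left_inv := by intro t; cases t <;> simp [F, g_neg_g]
  right_inv := by
    intro t
    cases t <;> simp only [F]
    · rw [show g s (g (-s) _) = g (- -s) (g (-s) _) by rw [neg_neg], g_neg_g]
    · rw [show g s (g (-s) _) = g (- -s) (g (-s) _) by rw [neg_neg], g_neg_g]

lemma permF_apply (s : Fin 4 → ZMod 3) (t : Triad) : permF s t = F s t := rfl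

lemma permF_add (a b : Fin 4 → ZMod 3) : permF (a + b) = permF a * permF b := by
  ext t
  cases t <;> simp [permF_apply, Equiv.Perm.mul_apply, F, g_comp]

lemma permF_zero : permF 0 = 1 := by
  ext t
  cases t <;> simp [permF_apply, F, g_zero]

lemma presU (s : Fin 4 → ZMod 3) : ∀ p q, U p q → U (F s p) (F s q) := by
  intro p q h
  cases p <;> cases q <;> simp only [U, F] at h ⊢ <;>
    first
      | exact h.elim
      | exact h
      | (rw [val4_g]; exact h)

lemma presP (s : Fin 4 → ZMod 3) : ∀ p q, P p q → P (F s p) (F s q) := by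
  intro p q h
  cases p <;> cases q <;> simp only [P, F] at h ⊢ <;>
    first
      | exact h.elim
      | exact h
      | rw [h]

lemma presL (s : Fin 4 → ZMod 3) : ∀ p q, L p q → L (F s p) (F s q) := by
  intro p q h
  cases p <;> cases q <;> simp only [L, F] at h ⊢ <;>
    first
      | exact h.elim
      | exact h
      | rw [h, g_add4]

lemma presM (s : Fin 4 → ZMod 3) :
    ∀ (r : RelM), r ∈ M → ∀ p q, r p q → r (F s p) (F s q) := by
  intro r hr
  induction hr using Submonoid.closure_induction with
  | mem x hx =>
      simp only [Set.mem_insert_iff, Set.mem_singleton_iff] at hx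
      rcases hx with rfl | rfl | rfl
      · exact presU s
      · exact presP s
      · exact presL s
  | one =>
      intro p q h
      exact congrArg (F s) h
  | mul x y hx hy ihx ihy =>
      intro p q h
      obtain ⟨r, h1, h2⟩ := h
      exact ⟨F s r, ihx _ _ h1, ihy _ _ h2⟩


/-- The compatibility condition defining `Aut(S)`: a pair `(N, ν)` of a monoid automorphism
of `M` and a permutation of `X` such that `p R q` implies `ν(p) N(R) ν(q)` for every
`R ∈ M` and all `p, q ∈ X`. -/
def compat (x : MulAut M × Equiv.Perm Triad) : Prop :=
  ∀ R : M, ∀ pt q : Triad, (↑R : RelM) pt q → (↑(x.1 R) : RelM) (x.2 pt) (x.2 q)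

/-! ### Auxiliary development (part 2) -/

lemma compat_permF (s : Fin 4 → ZMod 3) : compat ((1 : MulAut M), permF s) := by
  intro R p q h
  exact presM s R.1 R.2 p q h

/-- The subgroup `K`. -/
def K : Subgroup (MulAut M × Equiv.Perm Triad) where
  carrier := {x | compat x ∧ x.1 = 1 ∧ ∀ a : ZMod 4, x.2 (Triad.aug a) = Triad.aug a}
  one_mem' := ⟨fun _ _ _ h => h, rfl, fun _ => rfl⟩
  mul_mem' := by
    rintro x y ⟨hcx, hNx, hax⟩ ⟨hcy, hNy, hay⟩
    refine ⟨?_, ?_, ?_⟩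
    · intro R p q h
      exact hcx (y.1 R) _ _ (hcy R p q h)
    · rw [Prod.fst_mul, hNx, hNy, one_mul]
    · intro a
      show x.2 (y.2 (Triad.aug a)) = Triad.aug a
      rw [hay a, hax a]
  inv_mem' := by
    rintro x ⟨hc, hN, ha⟩
    have pres : ∀ p q, ∀ R : M, (↑R : RelM) p q → (↑R : RelM) (x.2 p) (x.2 q) := by
      intro p q R h
      have h2 := hc R p q h
      rw [hN] at h2
      exact h2
    have pk : ∀ (k : ℕ) (R : M) (p q : Triad),
        (↑R : RelM) p q → (↑R : RelM) ((x.2 ^ k) p) ((x.2 ^ k) q) := by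
      intro k
      induction k with
      | zero => intro R p q h; simpa using h
      | succ n ih =>
          intro R p q h
          rw [pow_succ]
          simp only [Equiv.Perm.mul_apply]
          exact ih R _ _ (pres _ _ R h)
    have hpos : 0 < orderOf x.2 := orderOf_pos x.2
    have hinv : (x.2)⁻¹ = x.2 ^ (orderOf x.2 - 1) := by
      have hmul : x.2 * x.2 ^ (orderOf x.2 - 1) = 1 := by
        rw [← pow_succ', Nat.sub_add_cancel hpos, pow_orderOf_eq_one]
      exact inv_eq_of_mul_eq_one_right hmul
    refine ⟨?_, ?_, ?_⟩
    · intro R p q h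
      have key : (↑R : RelM) ((x.2)⁻¹ p) ((x.2)⁻¹ q) := by
        rw [hinv]; exact pk _ R p q h
      show (↑(x⁻¹.1 R) : RelM) ((x.2)⁻¹ p) ((x.2)⁻¹ q)
      rw [Prod.fst_inv, hN, inv_one]
      exact key
    · rw [Prod.fst_inv, hN, inv_one]
    · intro a
      show (x.2)⁻¹ (Triad.aug a) = Triad.aug a
      apply x.2.injective
      rw [← Equiv.Perm.mul_apply, mul_inv_cancel, Equiv.Perm.one_apply, ha a]

lemma permF_mem (s : Fin 4 → ZMod 3) : ((1 : MulAut M), permF s) ∈ K :=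
  ⟨compat_permF s, rfl, fun _ => rfl⟩

/-- The homomorphism from `(ℤ₃)⁴`. -/
def φ : Multiplicative (Fin 4 → ZMod 3) →* MulAut M × Equiv.Perm Triad where
  toFun s := ((1 : MulAut M), permF s.toAdd)
  map_one' := by
    refine Prod.ext rfl ?_
    show permF 0 = 1
    exact permF_zero
  map_mul' a b := by
    refine Prod.ext (by simp) ?_
    show permF (a.toAdd + b.toAdd) = permF a.toAdd * permF b.toAdd
    exact permF_add _ _

lemma classify {x : MulAut M × Equiv.Perm Triad} (hx : x ∈ K) :
    ∃ s : Fin 4 → ZMod 3, φ (Multiplicative.ofAdd s) = x := by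
  obtain ⟨hc, hN, ha⟩ := hx
  have presU' : ∀ p q, U p q → U (x.2 p) (x.2 q) := by
    intro p q h
    have h2 := hc ⟨U, U_mem⟩ p q h
    rw [hN] at h2
    exact h2
  have presP' : ∀ p q, P p q → P (x.2 p) (x.2 q) := by
    intro p q h
    have h2 := hc ⟨P, P_mem⟩ p q h
    rw [hN] at h2
    exact h2
  have presL' : ∀ p q, L p q → L (x.2 p) (x.2 q) := by
    intro p q h
    have h2 := hc ⟨L, L_mem⟩ p q h
    rw [hN] at h2
    exact h2
  -- Step A : the shape of `x.2` on major and minor triads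
  have majmaj : ∀ z : ZMod 12, ∃ y : ZMod 12,
      x.2 (.maj z) = .maj y ∧ x.2 (.min z) = .min y ∧
      ((y.val : ZMod 4) = (z.val : ZMod 4)) := by
    intro z
    have hU1 : U (.aug ((z.val : ZMod 4))) (.maj z) := rfl
    have h1 := presU' _ _ hU1
    rw [ha] at h1
    have hP1 : P (.maj z) (.min z) := rfl
    have h2 := presP' _ _ hP1
    have hU2 : U (.min z) (.aug ((z.val : ZMod 4) - 1)) := by
      show (z.val : ZMod 4) = ((z.val : ZMod 4) - 1) + 1
      ring
    have h3 := presU' _ _ hU2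
    rw [ha] at h3
    rcases hm : x.2 (.maj z) with y | y | b
    · rw [hm] at h1 h2
      rcases hn : x.2 (.min z) with w | w | b
      · rw [hn] at h2; exact h2.elim
      · rw [hn] at h2
        exact ⟨y, rfl, congrArg Triad.min (show y = w from h2).symm, h1⟩
      · rw [hn] at h2; exact h2.elim
    · rw [hm] at h1 h2
      exfalso
      rcases hn : x.2 (.min z) with w | w | b
      · rw [hn] at h2 h3
        have hyw : y = w := h2
        have h1' : ((y.val : ZMod 4)) = (z.val : ZMod 4) + 1 := h1
        have h3' : ((w.val : ZMod 4)) = (z.val : ZMod 4) - 1 := h3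
        rw [← hyw] at h3'
        have hcontr : (z.val : ZMod 4) + 1 = (z.val : ZMod 4) - 1 := h1'.symm.trans h3'
        rw [sub_eq_add_neg] at hcontr
        have h4 : (1 : ZMod 4) = -1 := add_left_cancel hcontr
        exact absurd h4 (by decide)
      · rw [hn] at h2; exact h2.elim
      · rw [hn] at h2; exact h2.elim
    · rw [hm] at h1; exact h1.elim
  choose h hm hn hi using majmaj
  have hL4 : ∀ z : ZMod 12, h (z + 4) = h z + 4 := by
    intro z
    have hl : L (.maj z) (.min (z + 4)) := rfl
    have h2 := presL' _ _ hl
    rw [hm z, hn (z + 4)] at h2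
    exact h2
  have hiter : ∀ (n : ℕ) (z : ZMod 12),
      h (z + 4 * (n : ZMod 12)) = h z + 4 * (n : ZMod 12) := by
    intro n
    induction n with
    | zero => simp
    | succ m ih =>
        intro z
        have e : z + 4 * ((m + 1 : ℕ) : ZMod 12) = (z + 4 * (m : ZMod 12)) + 4 := by
          push_cast; ring
        rw [e, hL4, ih]
        push_cast; ring
  set s : Fin 4 → ZMod 3 :=
    fun i => dd (h ((i.val : ZMod 12)) - ((i.val : ZMod 12))) with hs
  have hgs : ∀ z : ZMod 12, h z = g s z := by
    intro z
    set z0 : ZMod 12 := ((z.val % 4 : ℕ) : ZMod 12) with hz0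
    have e1 : z = z0 + 4 * ((z.val / 4 : ℕ) : ZMod 12) := rep_s17 z
    have e2 : h z = h z0 + 4 * ((z.val / 4 : ℕ) : ZMod 12) := by
      conv_lhs => rw [e1]
      exact hiter _ z0
    have e3 : z0 + 4 * lift3 (dd (h z0 - z0)) = h z0 :=
      Dlem (h z0) z0 (hi z0)
    have e4 : s (idx4 z) = dd (h z0 - z0) := rfl
    show h z = z + 4 * lift3 (s (idx4 z))
    rw [e2, ← e3, e4]
    conv_rhs => rw [e1]
    ring
  refine ⟨s, ?_⟩
  have hperm : permF s = x.2 := by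
    ext t
    cases t with
    | maj z => rw [permF_apply]; show Triad.maj (g s z) = _; rw [← hgs, hm]
    | min z => rw [permF_apply]; show Triad.min (g s z) = _; rw [← hgs, hn]
    | aug a => rw [permF_apply]; show Triad.aug a = _; rw [ha]
  exact Prod.ext hN.symm hperm


/-- The subgroup of `Aut(S)` of pairs `(N, ν)` with `N` the identity and `ν` fixing
each augmented triad is isomorphic to `(ℤ₃)⁴`; in particular it has order 81. -/
theorem autS_kernel_structure :
    ∃ K : Subgroup (MulAut M × Equiv.Perm Triad),
      (∀ x, x ∈ K ↔
        (compat x ∧ x.1 = 1 ∧ ∀ a : ZMod 4, x.2 (Triad.aug a) = Triad.aug a)) ∧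
      Nat.card K = 81 ∧ Nonempty (K ≃* Multiplicative (Fin 4 → ZMod 3)) := by
  refine ⟨K, fun x => Iff.rfl, ?_⟩
  have hbij : Function.Bijective (φ.codRestrict K (fun s => permF_mem s.toAdd)) := by
    constructor
    · intro a b hab
      have h2 : permF a.toAdd = permF b.toAdd :=
        congrArg Prod.snd (congrArg Subtype.val hab)
      have h3 : ∀ z : ZMod 12, g a.toAdd z = g b.toAdd z := by
        intro z
        have h4 := congrFun (congrArg (fun (e : Equiv.Perm Triad) => (e : Triad → Triad)) h2)
          (Triad.maj z)
        simp only [permF_apply, F] at h4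
        exact Triad.maj.inj h4
      exact g_inj _ _ h3
    · rintro ⟨x, hx⟩
      obtain ⟨s, hs⟩ := classify hx
      exact ⟨Multiplicative.ofAdd s, Subtype.ext hs⟩
  let e := MulEquiv.ofBijective _ hbij
  constructor
  · rw [Nat.card_congr e.symm.toEquiv, Nat.card_congr Multiplicative.toAdd,
      Nat.card_eq_fintype_card, Fintype.card_fun]
    norm_num
  · exact ⟨e.symm⟩

end CubeDance
end
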